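/- arXiv:2201.00851 — 4 statements merged into one kernel-verified Lean document; each statement's English description precedes it below -/
import Mathlib

section
/- Let f be an admissible evaluation function. Then for every z ∈ ℂ with Im z > 0 there exists exactly one m ∈ ℂ with Im m > 0 such that ∫₀¹ (g_f(x)·m + z)^{−1} dx = −m. -/
open MeasureTheory Complex Filter ProbabilityTheory Matrix
open scoped ENNReal NNReal ComplexOrder

noncomputable section

/-- The `k`-th Fourier coefficient of a `1`-periodic function `f : ℝ → ℂ`. -/
def fCoeff (f : ℝ → ℂ) (k : ℤ) : ℂ :=
  ∫ y in (0:ℝ)..1, f y * Complex.exp (-(2 * (Real.pi : ℂ) * Complex.I * (k : ℂ) * (y : ℂ)))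

/-- The function `g_f(x) = ∑_{n odd} |∑_{k ≥ 0} c_{n 2^k} e^{2πikx}|²`. -/
def gFun (f : ℝ → ℂ) (x : ℝ) : ℝ :=
  ∑' n : ℕ, if Odd n then
    ‖∑' k : ℕ, fCoeff f ((n : ℤ) * 2 ^ k) *
      Complex.exp (2 * (Real.pi : ℂ) * Complex.I * (k : ℂ) * (x : ℂ))‖ ^ 2
  else 0

/-- Admissible evaluation function: `1`-periodic (i.e. a function on ℝ/ℤ), `C²`,
mean zero, and `g_f` uniformly bounded below on `[0,1]`. -/
def Admissible (f : ℝ → ℂ) : Prop :=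
  Function.Periodic f 1 ∧ ContDiff ℝ 2 f ∧ (∫ y in (0:ℝ)..1, f y) = 0 ∧
    ∃ g₀ : ℝ, 0 < g₀ ∧ ∀ x ∈ Set.Icc (0:ℝ) 1, g₀ ≤ gFun f x

/-- The doubling map `T(x) = 2x mod 1`. -/
def dbl (x : ℝ) : ℝ := Int.fract (2 * x)

/-- The dynamically defined matrix `X_{ij} = N^{-1/2} f(T^{2N(i-1)+j} x)`, `1 ≤ i,j ≤ N`. -/
def Xmat (N : ℕ) (f : ℝ → ℂ) (x : ℝ) : Matrix (Fin N) (Fin N) ℂ :=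
  Matrix.of fun i j => ((Real.sqrt N : ℝ) : ℂ)⁻¹ * f (dbl^[2 * N * i.val + j.val + 1] x)

/-- The Hermitization `H_X = [[0, X], [X†, 0]]`. -/
def HX (N : ℕ) (f : ℝ → ℂ) (x : ℝ) :
    Matrix (Fin N ⊕ Fin N) (Fin N ⊕ Fin N) ℂ :=
  Matrix.fromBlocks 0 (Xmat N f x) (Xmat N f x)ᴴ 0

/-- Normalized trace of the resolvent: `card⁻¹ Tr (H - z)⁻¹`. -/
def stT {ι : Type} [Fintype ι] [DecidableEq ι] (H : Matrix ι ι ℂ) (z : ℂ) : ℂ :=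
  (Fintype.card ι : ℂ)⁻¹ * Matrix.trace (H - z • (1 : Matrix ι ι ℂ))⁻¹

/-- The uniform probability measure on `[0,1]`. -/
def unif : Measure ℝ := volume.restrict (Set.Icc 0 1)

/-- `L = ⌊(log₂ N)^6⌋`. -/
def LL (N : ℕ) : ℕ := Nat.floor ((Real.logb 2 N) ^ 6)

/-- The `n`-th binary digit of `x` (for `x ∈ [0,1)`): `d_n = ⌊2^n x⌋ mod 2`. -/
def bdigit (x : ℝ) (n : ℕ) : ℕ := (Int.floor (2 ^ n * x)).toNat % 2

/-- The resampled point `y_k = ∑_{n=1}^{L} d_{n+k} 2^{-n} + ∑_{n > L} b_n^k 2^{-n}`. -/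
def yk (N : ℕ) (x : ℝ) (b : ℕ × ℕ → Bool) (k : ℕ) : ℝ :=
  (∑ n ∈ Finset.Icc 1 (LL N), (bdigit x (n + k) : ℝ) / 2 ^ n) +
  ∑' n : ℕ, if LL N < n then (if b (n, k) then (1:ℝ) / 2 ^ n else 0) else 0

/-- The resampled matrix `Y_{ij} = N^{-1/2} f(y_{2N(i-1)+j})`. -/
def Ymat (N : ℕ) (f : ℝ → ℂ) (x : ℝ) (b : ℕ × ℕ → Bool) : Matrix (Fin N) (Fin N) ℂ :=
  Matrix.of fun i j => ((Real.sqrt N : ℝ) : ℂ)⁻¹ * f (yk N x b (2 * N * i.val + j.val + 1))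

/-- The Hermitization `H_Y = [[0, Y], [Y†, 0]]`. -/
def HY (N : ℕ) (f : ℝ → ℂ) (x : ℝ) (b : ℕ × ℕ → Bool) :
    Matrix (Fin N ⊕ Fin N) (Fin N ⊕ Fin N) ℂ :=
  Matrix.fromBlocks 0 (Ymat N f x b) (Ymat N f x b)ᴴ 0

/-- `H_Y` reindexed over `Fin (N + N)`. -/
def HY2 (N : ℕ) (f : ℝ → ℂ) (x : ℝ) (b : ℕ × ℕ → Bool) :
    Matrix (Fin (N + N)) (Fin (N + N)) ℂ :=
  Matrix.reindex finSumFinEquiv finSumFinEquiv (HY N f x b)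

/-- The fair-coin measure on `Bool`. -/
def bern : Measure Bool := (2:ℝ≥0∞)⁻¹ • Measure.dirac true + (2:ℝ≥0∞)⁻¹ • Measure.dirac false

/-- Auxiliary index type: `none` indexes the uniform point `x`, `some (n,k)` the bit `b_n^k`. -/
def mixType : Option (ℕ × ℕ) → Type
  | none => ℝ
  | some _ => Bool

def mixMS : (o : Option (ℕ × ℕ)) → MeasurableSpace (mixType o)
  | none => (inferInstance : MeasurableSpace ℝ)
  | some _ => (inferInstance : MeasurableSpace Bool)

def mixFam {Ω : Type} (X : Ω → ℝ) (B : Ω → ℕ × ℕ → Bool) :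
    (o : Option (ℕ × ℕ)) → Ω → mixType o
  | none => X
  | some p => fun ω => B ω p

/-- A probability space carrying a uniform point `X` on `[0,1]` together with an
independent array of i.i.d. fair bits `B`, all jointly independent: this realizes the
product of the uniform measure on `[0,1]` with the Bernoulli(1/2) product measure. -/
def IsResamplingSpace {Ω : Type} [MeasurableSpace Ω] (μ : Measure Ω)
    (X : Ω → ℝ) (B : Ω → ℕ × ℕ → Bool) : Prop :=
  IsProbabilityMeasure μ ∧ Measure.map X μ = unif ∧
  (∀ p : ℕ × ℕ, Measure.map (fun ω => B ω p) μ = bern) ∧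
  ProbabilityTheory.iIndepFun (m := mixMS) (mixFam X B) μ

open Classical in
/-- Eigenvalues (with multiplicity) of a Hermitian matrix, as a total function. -/
def eigs {ι : Type} [Fintype ι] [DecidableEq ι] (A : Matrix ι ι ℂ) : ι → ℝ :=
  if h : A.IsHermitian then h.eigenvalues else 0

/-- `S_O(H; E, ρ) = 𝔼[ ∑_{injective tuples} O(2Nρ(λ_{i_1}-E), …) ]` where `2N = card ι`. -/
def SO {Ω ι : Type} [MeasurableSpace Ω] [Fintype ι] [DecidableEq ι]
    (μ : Measure Ω) (H : Ω → Matrix ι ι ℂ) {k : ℕ} (O : (Fin k → ℝ) → ℝ) (E ρ : ℝ) : ℝ :=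
  ∫ ω, (∑ t : Fin k ↪ ι, O fun a => (Fintype.card ι : ℝ) * ρ * (eigs (H ω) (t a) - E)) ∂μ

/-- Index type for the independent Gaussian entries of a GUE matrix. -/
def GUEidx (n : ℕ) : Type := Fin n ⊕ ({p : Fin n × Fin n // p.1 < p.2} × Bool)

/-- The family of real random variables built from the entries of a random matrix. -/
def GUEfam {n : ℕ} {Ω : Type} (W : Ω → Matrix (Fin n) (Fin n) ℂ) : GUEidx n → Ω → ℝ
  | .inl i => fun ω => (W ω i i).re
  | .inr (p, true) => fun ω => (W ω p.1.1 p.1.2).re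
  | .inr (p, false) => fun ω => (W ω p.1.1 p.1.2).im

/-- `W` is a normalized `n × n` GUE matrix (`n = 2N`): Hermitian, the entries on and above
the diagonal are independent centered Gaussians, diagonal entries real with variance `1/n`,
and the real and imaginary parts of the above-diagonal entries each of variance `1/(2n)`. -/
def IsGUE (n : ℕ) {Ω : Type} [MeasurableSpace Ω] (μ : Measure Ω)
    (W : Ω → Matrix (Fin n) (Fin n) ℂ) : Prop :=
  (∀ ω, (W ω).IsHermitian) ∧
  (∀ i j, Measurable fun ω => W ω i j) ∧
  ProbabilityTheory.iIndepFun (m := fun _ : GUEidx n => (inferInstance : MeasurableSpace ℝ))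
    (GUEfam W) μ ∧
  (∀ i : Fin n, Measure.map (fun ω => (W ω i i).re) μ =
    ProbabilityTheory.gaussianReal 0 ((n : ℝ≥0))⁻¹) ∧
  (∀ p : {p : Fin n × Fin n // p.1 < p.2},
    Measure.map (fun ω => (W ω p.1.1 p.1.2).re) μ =
      ProbabilityTheory.gaussianReal 0 ((2 * n : ℝ≥0))⁻¹ ∧
    Measure.map (fun ω => (W ω p.1.1 p.1.2).im) μ =
      ProbabilityTheory.gaussianReal 0 ((2 * n : ℝ≥0))⁻¹)

/-- The semicircle density `ρ_sc(E) = (2π)⁻¹ √((4 - E²)₊)`. -/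
def rhoSC (E : ℝ) : ℝ := (2 * Real.pi)⁻¹ * Real.sqrt (4 - E ^ 2)

open Classical in
/-- `H^{(U)}`: the matrix `H` with all rows and columns indexed by `U` replaced by `0`. -/
def minorMat {n : ℕ} (H : Matrix (Fin n) (Fin n) ℂ) (U : Finset (Fin n)) :
    Matrix (Fin n) (Fin n) ℂ :=
  Matrix.of fun i j => if i ∈ U ∨ j ∈ U then 0 else H i j

/-- `A|_{S,T}`: the submatrix with rows in `S` and columns in `T`. -/
def subM {n : ℕ} (A : Matrix (Fin n) (Fin n) ℂ) (S T : Finset (Fin n)) :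
    Matrix S T ℂ :=
  A.submatrix (fun a : S => (a : Fin n)) (fun a : T => (a : Fin n))

/-- The operator norm of a matrix, induced by the Euclidean norm. -/
def opNorm {ι : Type} [Fintype ι] [DecidableEq ι] (A : Matrix ι ι ℂ) : ℝ :=
  ‖Matrix.toEuclideanCLM (𝕜 := ℂ) A‖

/-- `φ(j) = ∑_{k ≥ 1} conj(c_k) c_{k 2^j}` for `j ≥ 0`. -/
def phiP (f : ℝ → ℂ) (j : ℕ) : ℂ :=
  ∑' k : ℕ, (starRingEnd ℂ) (fCoeff f ((k : ℤ) + 1)) * fCoeff f (((k : ℤ) + 1) * 2 ^ j)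

/-- `φ(j)` for `j ∈ ℤ`, with `φ(-j) = conj φ(j)`. -/
def phiZ (f : ℝ → ℂ) (j : ℤ) : ℂ :=
  if 0 ≤ j then phiP f j.toNat else (starRingEnd ℂ) (phiP f (-j).toNat)

open Classical in
/-- The banded Toeplitz correlation matrix `Φ^N`. -/
def PhiN (f : ℝ → ℂ) (N : ℕ) : Matrix (Fin N) (Fin N) ℂ :=
  Matrix.of fun i j =>
    if ((|(i : ℤ) - (j : ℤ)| : ℤ) : ℝ) ≤ (Real.logb 2 N) ^ 6 then phiZ f ((i : ℤ) - (j : ℤ))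
    else 0

/-- The stochastic control parameter `Γ = max(1, max_{a,b} |G_{ab}|)`. -/
def GammaP {ι : Type} [Fintype ι] (G : Matrix ι ι ℂ) : ℝ :=
  max 1 (sSup {r : ℝ | ∃ a b, r = ‖G a b‖})

open Classical in
/-- The stochastic control parameter `γ`: the largest operator norm of `(G^{(J)}|_{I,I})⁻¹`
over windows `I, J` of radius `W` around an index `i`. -/
def gammaP {n : ℕ} (W : ℝ) (H : Matrix (Fin n) (Fin n) ℂ) (z : ℂ) : ℝ :=
  max 1 (sSup {r : ℝ | ∃ (i : Fin n) (I J : Finset (Fin n)), Disjoint I J ∧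
    (∀ a ∈ I, |(a.val : ℝ) - (i.val : ℝ)| ≤ W) ∧
    (∀ a ∈ J, |(a.val : ℝ) - (i.val : ℝ)| ≤ W) ∧
    r = opNorm ((subM ((minorMat H J - z • 1)⁻¹) I I)⁻¹)})

/-- Max of the absolute values of the entries of a matrix. -/
def entMax {n : ℕ} (A : Matrix (Fin n) (Fin n) ℂ) : ℝ :=
  ⨆ i, ⨆ j, ‖A i j‖

end


set_option maxHeartbeats 1000000

section Stmt0Proof
open intervalIntegral
noncomputable section

def Dd (g : ℝ → ℝ) (z m : ℂ) (x : ℝ) : ℂ := (g x : ℂ) * m + z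
def Ff (g : ℝ → ℝ) (z : ℂ) (m : ℂ) : ℂ := -∫ x in (0:ℝ)..1, (Dd g z m x)⁻¹

variable {g : ℝ → ℝ} {z m : ℂ} {G : ℝ}

lemma Dd_im (x : ℝ) : (Dd g z m x).im = g x * m.im + z.im := by
  simp [Dd, Complex.add_im, Complex.mul_im]

lemma Dd_ne (hg0 : 0 ≤ g x) (hm : 0 < m.im) (hz : 0 < z.im) : Dd g z m x ≠ 0 := by
  intro h
  have h2 : (Dd g z m x).im = 0 := by rw [h]; simp
  rw [Dd_im] at h2; nlinarith

lemma Dd_cont (hgc : Continuous g) : Continuous (Dd g z m) := by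
  unfold Dd; fun_prop

lemma Dd_inv_cont (hgc : Continuous g) (hg0 : ∀ x, 0 ≤ g x) (hm : 0 < m.im)
    (hz : 0 < z.im) : Continuous fun x => (Dd g z m x)⁻¹ :=
  (Dd_cont hgc).inv₀ (fun x => Dd_ne (hg0 x) hm hz)


lemma norm_Dd_inv_le (hg0 : 0 ≤ g x) (hm : 0 < m.im) (hz : 0 < z.im) :
    ‖(Dd g z m x)⁻¹‖ ≤ 1 / z.im := by
  rw [norm_inv]
  have h1 : z.im ≤ (Dd g z m x).im := by rw [Dd_im]; nlinarith
  have h2 : z.im ≤ ‖Dd g z m x‖ := le_trans h1 (le_trans (le_abs_self _)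
    (Complex.abs_im_le_norm _))
  rw [one_div]
  exact inv_anti₀ hz h2

lemma norm_Ff_le (hgc : Continuous g) (hg0 : ∀ x, 0 ≤ g x) (hm : 0 < m.im)
    (hz : 0 < z.im) : ‖Ff g z m‖ ≤ 1 / z.im := by
  rw [Ff, norm_neg]
  have := intervalIntegral.norm_integral_le_of_norm_le_const
    (f := fun x => (Dd g z m x)⁻¹) (a := 0) (b := 1) (C := 1 / z.im)
    (fun x _ => norm_Dd_inv_le (hg0 x) hm hz)
  simpa using this

lemma normSq_Dd_pos (hg0 : 0 ≤ g x) (hm : 0 < m.im) (hz : 0 < z.im) :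
    0 < Complex.normSq (Dd g z m x) :=
  Complex.normSq_pos.2 (Dd_ne hg0 hm hz)

lemma nq_cont (hgc : Continuous g) : Continuous fun x => Complex.normSq (Dd g z m x) :=
  Complex.continuous_normSq.comp (Dd_cont hgc)

/-- The imaginary part of `Ff`. -/
lemma Ff_im (hgc : Continuous g) (hg0 : ∀ x, 0 ≤ g x) (hm : 0 < m.im) (hz : 0 < z.im) :
    (Ff g z m).im = ∫ x in (0:ℝ)..1, (g x * m.im + z.im) / Complex.normSq (Dd g z m x) := by
  have hInt := ((Dd_inv_cont hgc hg0 hm hz).intervalIntegrable (μ := volume) 0 1)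
  have := (Complex.imCLM.intervalIntegral_comp_comm hInt).symm
  simp only [Complex.imCLM_apply] at this
  have h2 : ∀ x : ℝ, ((Dd g z m x)⁻¹).im
      = -((g x * m.im + z.im) / Complex.normSq (Dd g z m x)) := by
    intro x
    rw [Complex.inv_im, Dd_im, neg_div]
  rw [Ff, Complex.neg_im, this]
  rw [show (fun x => ((Dd g z m x)⁻¹).im)
      = fun x => -((g x * m.im + z.im) / Complex.normSq (Dd g z m x)) from funext h2]
  rw [intervalIntegral.integral_neg, neg_neg]

lemma Ff_im_nonneg (hgc : Continuous g) (hg0 : ∀ x, 0 ≤ g x) (hm : 0 < m.im)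
    (hz : 0 < z.im) : 0 ≤ (Ff g z m).im := by
  rw [Ff_im hgc hg0 hm hz]
  apply intervalIntegral.integral_nonneg zero_le_one
  intro x _
  apply div_nonneg ?_ (Complex.normSq_nonneg _)
  nlinarith [hg0 x]

lemma norm_Dd_le (hgc : Continuous g) (hGub : ∀ x, g x ≤ G) (hg0 : ∀ x, 0 ≤ g x)
    (hz : 0 < z.im) (hmn : ‖m‖ ≤ 1 / z.im) (x : ℝ) :
    ‖Dd g z m x‖ ≤ G / z.im + ‖z‖ := by
  have h1 : ‖Dd g z m x‖ ≤ ‖(g x : ℂ) * m‖ + ‖z‖ := norm_add_le _ _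
  have h2 : ‖(g x : ℂ) * m‖ = g x * ‖m‖ := by
    rw [norm_mul, Complex.norm_real, Real.norm_of_nonneg (hg0 x)]
  have h3 : g x * ‖m‖ ≤ G * (1 / z.im) := by
    apply mul_le_mul (hGub x) hmn (norm_nonneg _) (le_trans (hg0 x) (hGub x))
  rw [h2] at h1
  calc ‖Dd g z m x‖ ≤ g x * ‖m‖ + ‖z‖ := h1
    _ ≤ G * (1 / z.im) + ‖z‖ := by linarith
    _ = G / z.im + ‖z‖ := by ring

lemma Ff_im_ge (hgc : Continuous g) (hg0 : ∀ x, 0 ≤ g x) (hGub : ∀ x, g x ≤ G)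
    (hm : 0 < m.im) (hz : 0 < z.im) (hmn : ‖m‖ ≤ 1 / z.im) :
    z.im / (G / z.im + ‖z‖) ^ 2 ≤ (Ff g z m).im := by
  rw [Ff_im hgc hg0 hm hz]
  set R := G / z.im + ‖z‖ with hR
  have hz1 : 0 < ‖z‖ := by
    have h := Complex.abs_im_le_norm z
    nlinarith [abs_nonneg z.im, le_abs_self z.im]
  have hz2 : 0 ≤ G / z.im := div_nonneg (le_trans (hg0 0) (hGub 0)) hz.le
  have hRpos : 0 < R := by rw [hR]; linarith
  have key : ∀ x ∈ Set.Icc (0:ℝ) 1,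
      z.im / R ^ 2 ≤ (g x * m.im + z.im) / Complex.normSq (Dd g z m x) := by
    intro x hx
    have hnq : Complex.normSq (Dd g z m x) ≤ R ^ 2 := by
      rw [← Complex.sq_norm]
      have h4 := norm_Dd_le hgc hGub hg0 hz hmn x
      rw [hR]
      nlinarith [norm_nonneg (Dd g z m x)]
    have hnqpos := normSq_Dd_pos (hg0 x) hm hz
    have hnum : z.im ≤ g x * m.im + z.im := by nlinarith [hg0 x]
    exact div_le_div₀ (by nlinarith [hg0 x]) hnum hnqpos hnq
  have h1 : IntervalIntegrable (fun _ : ℝ => z.im / R ^ 2) volume 0 1 :=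
    intervalIntegrable_const
  have h2 : IntervalIntegrable
      (fun x => (g x * m.im + z.im) / Complex.normSq (Dd g z m x)) volume 0 1 := by
    apply Continuous.intervalIntegrable
    apply Continuous.div (by fun_prop) (nq_cont hgc)
    intro x; exact (normSq_Dd_pos (hg0 x) hm hz).ne'
  have := intervalIntegral.integral_mono_on zero_le_one h1 h2 key
  simpa using this

-- Cauchy-Schwarz for interval integrals of continuous bounded nonneg functions
lemma myCS (u v : ℝ → ℝ) (hu : Continuous u) (hv : Continuous v)
    (hu0 : ∀ x, 0 ≤ u x) (hv0 : ∀ x, 0 ≤ v x) (C : ℝ)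
    (huC : ∀ x, u x ≤ C) (hvC : ∀ x, v x ≤ C) :
    ∫ x in (0:ℝ)..1, u x * v x ≤
      Real.sqrt (∫ x in (0:ℝ)..1, u x ^ 2) * Real.sqrt (∫ x in (0:ℝ)..1, v x ^ 2) := by
  set μ := volume.restrict (Set.Ioc (0:ℝ) 1) with hμ
  haveI : IsFiniteMeasure μ := by
    constructor
    rw [hμ, Measure.restrict_apply_univ]
    simp [Real.volume_Ioc]
  have hpq : Real.HolderConjugate 2 2 := Real.HolderConjugate.two_two
  have hmu : MemLp u (ENNReal.ofReal 2) μ :=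
    MemLp.of_bound hu.aestronglyMeasurable C
      (ae_of_all _ fun x => by rw [Real.norm_of_nonneg (hu0 x)]; exact huC x)
  have hmv : MemLp v (ENNReal.ofReal 2) μ :=
    MemLp.of_bound hv.aestronglyMeasurable C
      (ae_of_all _ fun x => by rw [Real.norm_of_nonneg (hv0 x)]; exact hvC x)
  have key := integral_mul_le_Lp_mul_Lq_of_nonneg hpq
    (ae_of_all _ hu0) (ae_of_all _ hv0) hmu hmv
  rw [intervalIntegral.integral_of_le zero_le_one,
    intervalIntegral.integral_of_le zero_le_one,
    intervalIntegral.integral_of_le zero_le_one]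
  have h2 : ∀ w : ℝ → ℝ, (∀ x, 0 ≤ w x) → (∫ a, w a ^ (2:ℝ) ∂μ) ^ ((1:ℝ)/2)
      = Real.sqrt (∫ a in Set.Ioc (0:ℝ) 1, w a ^ 2) := by
    intro w hw
    rw [Real.sqrt_eq_rpow]
    congr 1
    apply MeasureTheory.integral_congr_ae (ae_of_all _ fun x => ?_)
    rw [show ((2:ℝ)) = ((2:ℕ):ℝ) by norm_num, Real.rpow_natCast (w x) 2]
  rw [← h2 u hu0, ← h2 v hv0]
  exact key

lemma gnq_cont (hgc : Continuous g) (hg0 : ∀ x, 0 ≤ g x) (hm : 0 < m.im) (hz : 0 < z.im) :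
    Continuous fun x => g x / Complex.normSq (Dd g z m x) :=
  hgc.div (nq_cont hgc) (fun x => (normSq_Dd_pos (hg0 x) hm hz).ne')

lemma claim5 (hgc : Continuous g) (hg0 : ∀ x, 0 ≤ g x) (hGub : ∀ x, g x ≤ G)
    (hm : 0 < m.im) (hz : 0 < z.im) (hmn : ‖m‖ ≤ 1 / z.im) :
    m.im * ∫ x in (0:ℝ)..1, g x / Complex.normSq (Dd g z m x)
      ≤ (G / (G + z.im ^ 2)) * (Ff g z m).im := by
  have hG0 : 0 ≤ G := le_trans (hg0 0) (hGub 0)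
  have hs1 : m.im ≤ 1 / z.im := by
    have h1 : m.im ≤ ‖m‖ := le_trans (le_abs_self _)
      (by simpa using Complex.abs_im_le_norm m)
    linarith
  rw [Ff_im hgc hg0 hm hz, ← intervalIntegral.integral_const_mul,
    ← intervalIntegral.integral_const_mul]
  apply intervalIntegral.integral_mono_on zero_le_one
  · exact ((continuous_const.mul (gnq_cont hgc hg0 hm hz))).intervalIntegrable 0 1
  · apply Continuous.intervalIntegrable
    exact continuous_const.mul ((by fun_prop : Continuous fun x => g x * m.im + z.im).div
      (nq_cont hgc) (fun x => (normSq_Dd_pos (hg0 x) hm hz).ne'))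
  · intro x _
    have hnq := normSq_Dd_pos (hg0 x) hm hz
    have hsv : m.im * z.im ≤ 1 := by
      have := mul_le_mul_of_nonneg_right hs1 hz.le
      rwa [one_div, inv_mul_cancel₀ hz.ne'] at this
    rw [mul_div_assoc', mul_div_assoc', div_le_div_iff₀ hnq hnq]
    have hkey : m.im * g x * (G + z.im ^ 2) ≤ G * (g x * m.im + z.im) := by
      nlinarith [hg0 x, hGub x, hm.le, hz.le, mul_le_mul_of_nonneg_right hsv
        (mul_nonneg (hg0 x) hz.le)]
    have hden : 0 < G + z.im ^ 2 := by positivity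
    calc m.im * g x * normSq (Dd g z m x)
        = (m.im * g x * (G + z.im ^ 2)) * normSq (Dd g z m x) / (G + z.im ^ 2) := by
          field_simp
      _ ≤ (G * (g x * m.im + z.im)) * normSq (Dd g z m x) / (G + z.im ^ 2) := by
          gcongr
      _ = G / (G + z.im ^ 2) * (g x * m.im + z.im) * normSq (Dd g z m x) := by ring

lemma Ff_sub_eq (hgc : Continuous g) (hg0 : ∀ x, 0 ≤ g x) (hz : 0 < z.im)
    {m₁ m₂ : ℂ} (hm₁ : 0 < m₁.im) (hm₂ : 0 < m₂.im) :
    Ff g z m₁ - Ff g z m₂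
      = (m₁ - m₂) * ∫ x in (0:ℝ)..1, (g x : ℂ) * ((Dd g z m₁ x)⁻¹ * (Dd g z m₂ x)⁻¹) := by
  have hi1 := (Dd_inv_cont hgc hg0 hm₁ hz).intervalIntegrable (μ := volume) 0 1
  have hi2 := (Dd_inv_cont hgc hg0 hm₂ hz).intervalIntegrable (μ := volume) 0 1
  have h1 : Ff g z m₁ - Ff g z m₂
      = ∫ x in (0:ℝ)..1, ((Dd g z m₂ x)⁻¹ - (Dd g z m₁ x)⁻¹) := by
    rw [Ff, Ff, intervalIntegral.integral_sub hi2 hi1]; ring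
  rw [h1, ← intervalIntegral.integral_const_mul]
  apply intervalIntegral.integral_congr
  intro x _
  have h2 := Dd_ne (g := g) (z := z) (hg0 x) hm₁ hz
  have h3 := Dd_ne (g := g) (z := z) (hg0 x) hm₂ hz
  have hD : Dd g z m₁ x - Dd g z m₂ x = (g x : ℂ) * (m₁ - m₂) := by
    simp only [Dd]; ring
  field_simp
  linear_combination hD

lemma Ff_sub_norm_le (hgc : Continuous g) (hg0 : ∀ x, 0 ≤ g x) (hGub : ∀ x, g x ≤ G)
    (hz : 0 < z.im) {m₁ m₂ : ℂ} (hm₁ : 0 < m₁.im) (hm₂ : 0 < m₂.im) :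
    ‖Ff g z m₁ - Ff g z m₂‖ ≤ ‖m₁ - m₂‖ *
      (Real.sqrt (∫ x in (0:ℝ)..1, g x / Complex.normSq (Dd g z m₁ x)) *
       Real.sqrt (∫ x in (0:ℝ)..1, g x / Complex.normSq (Dd g z m₂ x))) := by
  have hG0 : 0 ≤ G := le_trans (hg0 0) (hGub 0)
  set u₁ : ℝ → ℝ := fun x => Real.sqrt (g x) / ‖Dd g z m₁ x‖ with hu₁
  set u₂ : ℝ → ℝ := fun x => Real.sqrt (g x) / ‖Dd g z m₂ x‖ with hu₂
  have habs : ∀ (mm : ℂ), 0 < mm.im → ∀ x : ℝ, z.im ≤ ‖Dd g z mm x‖ := by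
    intro mm hmm x
    have h1 : z.im ≤ (Dd g z mm x).im := by rw [Dd_im]; nlinarith [hg0 x]
    exact le_trans h1 (le_trans (le_abs_self _) (Complex.abs_im_le_norm _))
  have hu_cont : ∀ (mm : ℂ) (hmm : 0 < mm.im),
      Continuous fun x => Real.sqrt (g x) / ‖Dd g z mm x‖ := by
    intro mm hmm
    apply Continuous.div (hgc.sqrt) (continuous_norm.comp (Dd_cont hgc))
    intro x
    exact fun h => (Dd_ne (hg0 x) hmm hz) (norm_eq_zero.mp h)
  have hu_nonneg : ∀ (mm : ℂ) (x : ℝ),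
      0 ≤ Real.sqrt (g x) / ‖Dd g z mm x‖ :=
    fun mm x => div_nonneg (Real.sqrt_nonneg _) (norm_nonneg _)
  have hu_bd : ∀ (mm : ℂ), 0 < mm.im → ∀ x : ℝ,
      Real.sqrt (g x) / ‖Dd g z mm x‖ ≤ Real.sqrt G / z.im := by
    intro mm hmm x
    apply div_le_div₀ (Real.sqrt_nonneg G) (Real.sqrt_le_sqrt (hGub x)) hz (habs mm hmm x)
  have husq : ∀ (mm : ℂ), 0 < mm.im → ∀ x : ℝ,
      (Real.sqrt (g x) / ‖Dd g z mm x‖) ^ 2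
        = g x / Complex.normSq (Dd g z mm x) := by
    intro mm hmm x
    rw [div_pow, Real.sq_sqrt (hg0 x), Complex.sq_norm]
  rw [Ff_sub_eq hgc hg0 hz hm₁ hm₂, norm_mul]
  apply mul_le_mul_of_nonneg_left ?_ (norm_nonneg _) |>.trans_eq rfl
  have step1 : ‖∫ x in (0:ℝ)..1, (g x : ℂ) * ((Dd g z m₁ x)⁻¹ * (Dd g z m₂ x)⁻¹)‖
      ≤ ∫ x in (0:ℝ)..1, u₁ x * u₂ x := by
    have := intervalIntegral.norm_integral_le_integral_norm (μ := volume)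
      (f := fun x => (g x : ℂ) * ((Dd g z m₁ x)⁻¹ * (Dd g z m₂ x)⁻¹)) (a := 0) (b := 1)
      zero_le_one
    apply this.trans_eq
    apply intervalIntegral.integral_congr
    intro x _
    simp only [hu₁, hu₂]
    rw [norm_mul, norm_mul, norm_inv, norm_inv,
      Complex.norm_real, Real.norm_of_nonneg (hg0 x),
      div_mul_div_comm, Real.mul_self_sqrt (hg0 x)]
    ring
  have step2 := myCS u₁ u₂ (hu_cont m₁ hm₁) (hu_cont m₂ hm₂) (hu_nonneg m₁) (hu_nonneg m₂)
    (Real.sqrt G / z.im) (hu_bd m₁ hm₁) (hu_bd m₂ hm₂)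
  have e1 : (∫ x in (0:ℝ)..1, u₁ x ^ 2)
      = ∫ x in (0:ℝ)..1, g x / Complex.normSq (Dd g z m₁ x) :=
    intervalIntegral.integral_congr (fun x _ => husq m₁ hm₁ x)
  have e2 : (∫ x in (0:ℝ)..1, u₂ x ^ 2)
      = ∫ x in (0:ℝ)..1, g x / Complex.normSq (Dd g z m₂ x) :=
    intervalIntegral.integral_congr (fun x _ => husq m₂ hm₂ x)
  rw [← e1, ← e2]
  exact step1.trans step2


lemma intA_nonneg (hgc : Continuous g) (hg0 : ∀ x, 0 ≤ g x) (hm : 0 < m.im)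
    (hz : 0 < z.im) : 0 ≤ ∫ x in (0:ℝ)..1, g x / Complex.normSq (Dd g z m x) :=
  intervalIntegral.integral_nonneg zero_le_one
    (fun x _ => div_nonneg (hg0 x) (normSq_Dd_pos (hg0 x) hm hz).le)

lemma contr (hgc : Continuous g) (hg0 : ∀ x, 0 ≤ g x) (hGub : ∀ x, g x ≤ G)
    (hz : 0 < z.im) {m₁ m₂ : ℂ} (hm₁ : 0 < m₁.im) (hn₁ : ‖m₁‖ ≤ 1 / z.im)
    (hm₂ : 0 < m₂.im) (hn₂ : ‖m₂‖ ≤ 1 / z.im) :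
    ‖Ff g z m₁ - Ff g z m₂‖ * Real.sqrt (m₁.im * m₂.im)
      ≤ (G / (G + z.im ^ 2)) *
        (‖m₁ - m₂‖ * Real.sqrt ((Ff g z m₁).im * (Ff g z m₂).im)) := by
  have hG0 : 0 ≤ G := le_trans (hg0 0) (hGub 0)
  set θ := G / (G + z.im ^ 2) with hθ
  have hθ0 : 0 ≤ θ := by positivity
  set A₁ := ∫ x in (0:ℝ)..1, g x / Complex.normSq (Dd g z m₁ x) with hA₁
  set A₂ := ∫ x in (0:ℝ)..1, g x / Complex.normSq (Dd g z m₂ x) with hA₂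
  have hA₁0 : 0 ≤ A₁ := intA_nonneg hgc hg0 hm₁ hz
  have hA₂0 : 0 ≤ A₂ := intA_nonneg hgc hg0 hm₂ hz
  have h5₁ : m₁.im * A₁ ≤ θ * (Ff g z m₁).im := claim5 hgc hg0 hGub hm₁ hz hn₁
  have h5₂ : m₂.im * A₂ ≤ θ * (Ff g z m₂).im := claim5 hgc hg0 hGub hm₂ hz hn₂
  have hmain := Ff_sub_norm_le hgc hg0 hGub hz hm₁ hm₂
  calc ‖Ff g z m₁ - Ff g z m₂‖ * Real.sqrt (m₁.im * m₂.im)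
      ≤ (‖m₁ - m₂‖ * (Real.sqrt A₁ * Real.sqrt A₂)) * Real.sqrt (m₁.im * m₂.im) :=
        mul_le_mul_of_nonneg_right hmain (Real.sqrt_nonneg _)
    _ = ‖m₁ - m₂‖ * (Real.sqrt (A₁ * m₁.im) * Real.sqrt (A₂ * m₂.im)) := by
        rw [Real.sqrt_mul hm₁.le, Real.sqrt_mul hA₁0, Real.sqrt_mul hA₂0]; ring
    _ ≤ ‖m₁ - m₂‖ * (Real.sqrt (θ * (Ff g z m₁).im) * Real.sqrt (θ * (Ff g z m₂).im)) := by
        apply mul_le_mul_of_nonneg_left ?_ (norm_nonneg _)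
        apply mul_le_mul (Real.sqrt_le_sqrt (by linarith [h5₁])) 
          (Real.sqrt_le_sqrt (by linarith [h5₂])) (Real.sqrt_nonneg _) (Real.sqrt_nonneg _)
    _ = θ * (‖m₁ - m₂‖ * Real.sqrt ((Ff g z m₁).im * (Ff g z m₂).im)) := by
        have hF₁ : 0 ≤ (Ff g z m₁).im := Ff_im_nonneg hgc hg0 hm₁ hz
        rw [← Real.sqrt_mul (by positivity), show θ * (Ff g z m₁).im * (θ * (Ff g z m₂).im)
          = θ^2 * ((Ff g z m₁).im * (Ff g z m₂).im) by ring,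
          Real.sqrt_mul (sq_nonneg θ), Real.sqrt_sq hθ0]
        ring

/-- Master existence and uniqueness lemma. -/
lemma master (hgc : Continuous g) (hg0 : ∀ x, 0 ≤ g x) (hGub : ∀ x, g x ≤ G)
    (hz : 0 < z.im) :
    ∃! m : ℂ, 0 < m.im ∧ (∫ x in (0:ℝ)..1, ((g x : ℂ) * m + z)⁻¹) = -m := by
  have hG0 : 0 ≤ G := le_trans (hg0 0) (hGub 0)
  set v := z.im with hv
  set θ := G / (G + v ^ 2) with hθ
  have hθ0 : 0 ≤ θ := by positivity
  have hθ1 : θ < 1 := by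
    rw [hθ, div_lt_one (by positivity)]; nlinarith
  set R := G / v + ‖z‖ with hR
  have hzn : v ≤ ‖z‖ := le_trans (le_abs_self _) (by simpa using Complex.abs_im_le_norm z)
  have hRv : v ≤ R := by
    have : 0 ≤ G / v := div_nonneg hG0 hz.le
    rw [hR]; linarith
  have hR0 : 0 < R := lt_of_lt_of_le hz hRv
  set η := v / R ^ 2 with hη
  have hη0 : 0 < η := by positivity
  have hηv : η ≤ 1 / v := by
    rw [hη, div_le_div_iff₀ (by positivity) hz]
    nlinarith
  -- invariance
  set P : ℂ → Prop := fun m => ‖m‖ ≤ 1 / v ∧ η ≤ m.im with hP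
  have hPim : ∀ m, P m → 0 < m.im := fun m hm => lt_of_lt_of_le hη0 hm.2
  have hFP : ∀ m, P m → P (Ff g z m) := by
    intro m hm
    refine ⟨norm_Ff_le hgc hg0 (hPim m hm) hz, ?_⟩
    exact Ff_im_ge hgc hg0 hGub (hPim m hm) hz hm.1
  -- fixed points are in P
  have hfixP : ∀ m, 0 < m.im → Ff g z m = m → P m := by
    intro m hm hfix
    have h1 : ‖m‖ ≤ 1 / v := by rw [← hfix]; exact norm_Ff_le hgc hg0 hm hz
    refine ⟨h1, ?_⟩
    have := Ff_im_ge hgc hg0 hGub hm hz h1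
    rw [hfix] at this; exact this
  -- Lipschitz on P
  set L := θ / (η * v) with hL
  have hLip : ∀ m m', P m → P m' → ‖Ff g z m - Ff g z m'‖ ≤ L * ‖m - m'‖ := by
    intro m m' hm hm'
    have h1 := contr hgc hg0 hGub hz (hPim m hm) hm.1 (hPim m' hm') hm'.1
    have h2 : η ≤ Real.sqrt (m.im * m'.im) := by
      rw [show η = Real.sqrt (η * η) from (Real.sqrt_mul_self hη0.le).symm]
      exact Real.sqrt_le_sqrt (mul_le_mul hm.2 hm'.2 hη0.le (hPim m hm).le)
    have h3 : Real.sqrt ((Ff g z m).im * (Ff g z m').im) ≤ 1 / v := by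
      rw [show (1:ℝ)/v = Real.sqrt ((1/v) * (1/v)) from
        (Real.sqrt_mul_self (by positivity)).symm]
      apply Real.sqrt_le_sqrt
      have e1 : (Ff g z m).im ≤ 1 / v := le_trans
        (le_trans (le_abs_self _) (by simpa using Complex.abs_im_le_norm (Ff g z m)))
        (norm_Ff_le hgc hg0 (hPim m hm) hz)
      have e2 : (Ff g z m').im ≤ 1 / v := le_trans
        (le_trans (le_abs_self _) (by simpa using Complex.abs_im_le_norm (Ff g z m')))
        (norm_Ff_le hgc hg0 (hPim m' hm') hz)
      have e3 : 0 ≤ (Ff g z m).im := le_trans hη0.le (hFP m hm).2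
      have e4 : 0 ≤ (Ff g z m').im := le_trans hη0.le (hFP m' hm').2
      exact mul_le_mul e1 e2 e4 (by positivity)
    have h4 : ‖Ff g z m - Ff g z m'‖ * η ≤ θ * (‖m - m'‖ * (1 / v)) := by
      calc ‖Ff g z m - Ff g z m'‖ * η
          ≤ ‖Ff g z m - Ff g z m'‖ * Real.sqrt (m.im * m'.im) :=
            mul_le_mul_of_nonneg_left h2 (norm_nonneg _)
        _ ≤ θ * (‖m - m'‖ * Real.sqrt ((Ff g z m).im * (Ff g z m').im)) := h1
        _ ≤ θ * (‖m - m'‖ * (1 / v)) := by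
            apply mul_le_mul_of_nonneg_left ?_ hθ0
            exact mul_le_mul_of_nonneg_left h3 (norm_nonneg _)
    rw [hL]
    rw [div_mul_eq_mul_div, le_div_iff₀ (by positivity)]
    calc ‖Ff g z m - Ff g z m'‖ * (η * v) = (‖Ff g z m - Ff g z m'‖ * η) * v := by ring
      _ ≤ (θ * (‖m - m'‖ * (1 / v))) * v := mul_le_mul_of_nonneg_right h4 hz.le
      _ = θ * ‖m - m'‖ := by field_simp
  -- the iteration
  set m₀ : ℂ := (η : ℂ) * Complex.I with hm₀
  have hm₀P : P m₀ := by
    constructor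
    · rw [hm₀, norm_mul, Complex.norm_I, mul_one, Complex.norm_real,
        Real.norm_of_nonneg hη0.le]
      exact hηv
    · rw [hm₀]; simp
  set seq : ℕ → ℂ := fun n => (Ff g z)^[n] m₀ with hseq
  have hseqsucc : ∀ n, seq (n + 1) = Ff g z (seq n) := by
    intro n; rw [hseq]; exact Function.iterate_succ_apply' _ _ _
  have hseqP : ∀ n, P (seq n) := by
    intro n; induction n with
    | zero => exact hm₀P
    | succ k ih => rw [hseqsucc]; exact hFP _ ih
  -- geometric decrease
  set a : ℕ → ℝ := fun n => ‖seq (n + 1) - seq n‖ with ha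
  set S : ℕ → ℝ := fun n => Real.sqrt ((seq (n+1)).im * (seq n).im) with hS
  set b : ℕ → ℝ := fun n => a n / S n with hb
  have hSpos : ∀ n, 0 < S n := by
    intro n
    apply Real.sqrt_pos.mpr
    exact mul_pos (hPim _ (hseqP (n+1))) (hPim _ (hseqP n))
  have hb0 : ∀ n, 0 ≤ b n := fun n => div_nonneg (norm_nonneg _) (hSpos n).le
  have hbsucc : ∀ n, b (n + 1) ≤ θ * b n := by
    intro n
    have h1 := contr hgc hg0 hGub hz (hPim _ (hseqP (n+1))) (hseqP (n+1)).1
      (hPim _ (hseqP n)) (hseqP n).1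
    rw [← hseqsucc (n+1), ← hseqsucc n] at h1
    show a (n+1) / S (n+1) ≤ θ * (a n / S n)
    rw [mul_div_assoc', div_le_div_iff₀ (hSpos (n+1)) (hSpos n)]
    have h2 : a (n+1) * S n ≤ θ * (a n * S (n+1)) := h1
    calc a (n+1) * S n ≤ θ * (a n * S (n+1)) := h2
      _ = θ * a n * S (n+1) := by ring
  have hbgeo : ∀ n, b n ≤ θ ^ n * b 0 := by
    intro n
    induction n with
    | zero => simp
    | succ k ih =>
      calc b (k+1) ≤ θ * b k := hbsucc k
        _ ≤ θ * (θ ^ k * b 0) := mul_le_mul_of_nonneg_left ih hθ0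
        _ = θ ^ (k+1) * b 0 := by ring
  have hSle : ∀ n, S n ≤ 1 / v := by
    intro n
    rw [show (1:ℝ)/v = Real.sqrt ((1/v) * (1/v)) from
      (Real.sqrt_mul_self (by positivity)).symm]
    apply Real.sqrt_le_sqrt
    have e1 : (seq (n+1)).im ≤ 1 / v := le_trans
      (le_trans (le_abs_self _) (by simpa using Complex.abs_im_le_norm (seq (n+1))))
      (hseqP (n+1)).1
    have e2 : (seq n).im ≤ 1 / v := le_trans
      (le_trans (le_abs_self _) (by simpa using Complex.abs_im_le_norm (seq n)))
      (hseqP n).1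
    exact mul_le_mul e1 e2 (hPim _ (hseqP n)).le (by positivity)
  have hdist : ∀ n, dist (seq n) (seq (n+1)) ≤ (b 0 / v) * θ ^ n := by
    intro n
    rw [dist_eq_norm, norm_sub_rev]
    have h1 : a n = b n * S n := by
      rw [hb]
      exact (div_mul_cancel₀ (a n) (hSpos n).ne').symm
    calc ‖seq (n+1) - seq n‖ = a n := rfl
      _ = b n * S n := h1
      _ ≤ (θ ^ n * b 0) * (1 / v) := mul_le_mul (hbgeo n) (hSle n) (hSpos n).le
          (mul_nonneg (pow_nonneg hθ0 n) (hb0 0))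
      _ = (b 0 / v) * θ ^ n := by ring
  have hcauchy : CauchySeq seq := cauchySeq_of_le_geometric θ (b 0 / v) hθ1 hdist
  obtain ⟨mstar, hms⟩ := cauchySeq_tendsto_of_complete hcauchy
  -- mstar satisfies P
  have hmsim : Filter.Tendsto (fun n => (seq n).im) Filter.atTop (nhds mstar.im) :=
    (Complex.continuous_im.tendsto mstar).comp hms
  have hmsn : Filter.Tendsto (fun n => ‖seq n‖) Filter.atTop (nhds ‖mstar‖) :=
    (continuous_norm.tendsto mstar).comp hms
  have hmstarP : P mstar := by
    constructor
    · exact le_of_tendsto hmsn (Filter.Eventually.of_forall fun n => (hseqP n).1)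
    · exact ge_of_tendsto hmsim (Filter.Eventually.of_forall fun n => (hseqP n).2)
  -- fixed point
  have hfix : Ff g z mstar = mstar := by
    have hd0 : Filter.Tendsto (fun n => dist (seq n) mstar) Filter.atTop (nhds 0) :=
      tendsto_iff_dist_tendsto_zero.mp hms
    have h1 : Filter.Tendsto (fun n => Ff g z (seq n)) Filter.atTop (nhds (Ff g z mstar)) := by
      apply tendsto_iff_dist_tendsto_zero.mpr
      refine squeeze_zero (g := fun n => L * dist (seq n) mstar)
        (fun n => dist_nonneg) (fun n => ?_) ?_
      · have := hLip (seq n) mstar (hseqP n) hmstarP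
        simpa [dist_eq_norm] using this
      · simpa using hd0.const_mul L
    have h2 : Filter.Tendsto (fun n => Ff g z (seq n)) Filter.atTop (nhds mstar) := by
      have h3 : (fun n => Ff g z (seq n)) = fun n => seq (n + 1) :=
        funext fun n => (hseqsucc n).symm
      rw [h3]
      exact hms.comp (Filter.tendsto_add_atTop_nat 1)
    exact tendsto_nhds_unique h1 h2
  -- conclusion
  refine ⟨mstar, ⟨hPim _ hmstarP, ?_⟩, ?_⟩
  · have : -Ff g z mstar = -mstar := by rw [hfix]
    rw [Ff, neg_neg] at this
    exact this
  · intro m' hm'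
    have hfix' : Ff g z m' = m' := by
      rw [Ff, show (fun x => (Dd g z m' x)⁻¹) = fun x => ((g x : ℂ) * m' + z)⁻¹ from rfl,
        hm'.2, neg_neg]
    have hm'P : P m' := hfixP m' hm'.1 hfix'
    have h1 := contr hgc hg0 hGub hz (hPim _ hm'P) hm'P.1 (hPim _ hmstarP) hmstarP.1
    rw [hfix', hfix] at h1
    have hsq : 0 < Real.sqrt (m'.im * mstar.im) :=
      Real.sqrt_pos.mpr (mul_pos (hPim _ hm'P) (hPim _ hmstarP))
    have h2 : ‖m' - mstar‖ * Real.sqrt (m'.im * mstar.im) ≤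
        θ * (‖m' - mstar‖ * Real.sqrt (m'.im * mstar.im)) := h1
    have h3 : 0 ≤ ‖m' - mstar‖ * Real.sqrt (m'.im * mstar.im) :=
      mul_nonneg (norm_nonneg _) hsq.le
    have h4 : ‖m' - mstar‖ * Real.sqrt (m'.im * mstar.im) = 0 := by nlinarith
    have h5 : ‖m' - mstar‖ = 0 := by
      rcases mul_eq_zero.mp h4 with h | h
      · exact h
      · exact absurd h hsq.ne'
    exact sub_eq_zero.mp (norm_eq_zero.mp h5)


/-- Integration by parts for Fourier coefficients of a periodic `C¹` function. -/
lemma fCoeff_by_parts (f : ℝ → ℂ) (hper : Function.Periodic f 1)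
    (hdiff : Differentiable ℝ f) (hcont : Continuous (deriv f)) (k : ℤ) (hk : k ≠ 0) :
    fCoeff f k = (2 * (Real.pi : ℂ) * Complex.I * (k : ℂ))⁻¹ * fCoeff (deriv f) k := by
  set c : ℂ := -(2 * (Real.pi : ℂ) * Complex.I * (k : ℂ)) with hc
  have hc0 : c ≠ 0 := by
    rw [hc]
    simp only [ne_eq, neg_eq_zero, mul_eq_zero]
    push_neg
    refine ⟨⟨⟨by norm_num, ?_⟩, Complex.I_ne_zero⟩, ?_⟩
    · exact_mod_cast Real.pi_ne_zero
    · exact_mod_cast hk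
  set v : ℝ → ℂ := fun y => Complex.exp (c * (y : ℂ)) * c⁻¹ with hv
  have hvderiv : ∀ y : ℝ, HasDerivAt v (Complex.exp (c * (y : ℂ))) y := by
    intro y
    have h1 : HasDerivAt (fun w : ℂ => Complex.exp (c * w)) (Complex.exp (c * (y:ℂ)) * c) (y:ℂ) := by
      simpa [mul_comm] using ((hasDerivAt_id ((y:ℝ):ℂ)).const_mul c).cexp
    have h2 := h1.comp_ofReal
    have h3 := h2.mul_const c⁻¹
    simpa [mul_assoc, mul_inv_cancel₀ hc0] using h3
  have hfderiv : ∀ y : ℝ, y ∈ Set.uIcc (0:ℝ) 1 → HasDerivAt f (deriv f y) y :=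
    fun y _ => (hdiff y).hasDerivAt
  have hibp := intervalIntegral.integral_mul_deriv_eq_deriv_mul
    (u := f) (u' := deriv f) (v := v) (v' := fun y => Complex.exp (c * (y:ℂ)))
    hfderiv (fun y _ => hvderiv y)
    (hcont.intervalIntegrable 0 1)
    ((Complex.continuous_exp.comp (continuous_const.mul Complex.continuous_ofReal)).intervalIntegrable 0 1)
  have hexp1 : Complex.exp (c * (1:ℂ)) = 1 := by
    rw [mul_one, hc, show -(2 * (Real.pi : ℂ) * Complex.I * (k : ℂ))
      = ((-k : ℤ) : ℂ) * (2 * (Real.pi : ℂ) * Complex.I) by push_cast; ring]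
    exact Complex.exp_int_mul_two_pi_mul_I (-k)
  have hbdry : f 1 * v 1 - f 0 * v 0 = 0 := by
    have hf10 : f 1 = f 0 := by simpa using hper 0
    rw [hv]
    simp only [Complex.ofReal_one, Complex.ofReal_zero, mul_zero, Complex.exp_zero, hexp1, hf10]
    ring
  have hev : ∀ y : ℝ, f y * Complex.exp (-(2 * (Real.pi : ℂ) * Complex.I * (k : ℂ) * (y : ℂ)))
      = f y * Complex.exp (c * (y:ℂ)) := by
    intro y; congr 2; rw [hc]; ring
  have hev' : ∀ y : ℝ, deriv f y * Complex.exp (-(2 * (Real.pi : ℂ) * Complex.I * (k : ℂ) * (y : ℂ)))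
      = deriv f y * Complex.exp (c * (y:ℂ)) := by
    intro y; congr 2; rw [hc]; ring
  have e1 : fCoeff f k = ∫ y in (0:ℝ)..1, f y * Complex.exp (c * (y:ℂ)) := by
    rw [fCoeff]; exact intervalIntegral.integral_congr fun y _ => hev y
  have e2 : fCoeff (deriv f) k = ∫ y in (0:ℝ)..1, deriv f y * Complex.exp (c * (y:ℂ)) := by
    rw [fCoeff]; exact intervalIntegral.integral_congr fun y _ => hev' y
  rw [e1, e2, hibp, hbdry]
  have : (∫ y in (0:ℝ)..1, deriv f y * v y)
      = c⁻¹ * ∫ y in (0:ℝ)..1, deriv f y * Complex.exp (c * (y:ℂ)) := by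
    rw [← intervalIntegral.integral_const_mul]
    apply intervalIntegral.integral_congr
    intro y _
    rw [hv]; ring
  rw [this]
  have hcinv : (2 * (Real.pi : ℂ) * Complex.I * (k : ℂ))⁻¹ = -c⁻¹ := by
    rw [hc, inv_neg, neg_neg]
  rw [hcinv]; ring

/-- Quadratic decay of Fourier coefficients of a periodic `C²` function. -/
lemma fCoeff_decay (f : ℝ → ℂ) (hper : Function.Periodic f 1) (hf : ContDiff ℝ 2 f) :
    ∃ C : ℝ, 0 < C ∧ ∀ k : ℤ, 1 ≤ k → ‖fCoeff f k‖ ≤ C / (k : ℝ) ^ 2 := by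
  have hdiff : Differentiable ℝ f := hf.differentiable (by norm_num)
  have hf' : ContDiff ℝ 1 (deriv f) := by
    have h2 : ContDiff ℝ ((1:ℕ)+1) f := by
      exact_mod_cast hf
    exact ((contDiff_succ_iff_deriv (n := 1)).mp h2).2.2
  have hper' : Function.Periodic (deriv f) 1 := by
    intro x
    have h1 : (fun y => f (y + 1)) = f := funext fun y => hper y
    calc deriv f (x + 1) = deriv (fun y => f (y + 1)) x := (deriv_comp_add_const f 1 x).symm
      _ = deriv f x := by rw [h1]
  have hdiff' : Differentiable ℝ (deriv f) := hf'.differentiable (by norm_num)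
  have hcont' : Continuous (deriv f) := hf'.continuous
  have hcont'' : Continuous (deriv (deriv f)) := hf'.continuous_deriv (by norm_num)
  -- bound on second derivative over [0,1]
  obtain ⟨M, hM⟩ := (isCompact_Icc (a := (0:ℝ)) (b := 1)).exists_bound_of_continuousOn
    hcont''.continuousOn
  have hM0 : 0 ≤ M := le_trans (norm_nonneg _) (hM 0 (by norm_num))
  refine ⟨M + 1, by positivity, ?_⟩
  intro k hk
  have hk0 : k ≠ 0 := by omega
  have hkR : (1:ℝ) ≤ (k:ℝ) := by exact_mod_cast hk
  -- second coefficient bound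
  have hcoeff2 : ‖fCoeff (deriv (deriv f)) k‖ ≤ M := by
    rw [fCoeff]
    have hbd : ∀ y ∈ Set.uIoc (0:ℝ) 1,
        ‖deriv (deriv f) y * Complex.exp (-(2 * (Real.pi : ℂ) * Complex.I * (k : ℂ) * (y : ℂ)))‖
          ≤ M := by
      intro y hy
      rw [norm_mul]
      have habs : ‖Complex.exp (-(2 * (Real.pi : ℂ) * Complex.I * (k : ℂ) * (y : ℂ)))‖ = 1 := by
        have hre : (-(2 * (Real.pi : ℂ) * Complex.I * (k : ℂ) * (y : ℂ))).re = 0 := by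
          simp [Complex.mul_re, Complex.mul_im]
        rw [Complex.norm_exp, hre, Real.exp_zero]
      rw [habs, mul_one]
      have hy' : y ∈ Set.Icc (0:ℝ) 1 := by
        rcases Set.uIoc_of_le (zero_le_one (α := ℝ)) ▸ hy with ⟨h1, h2⟩
        exact ⟨le_of_lt h1, h2⟩
      exact hM y hy'
    have := intervalIntegral.norm_integral_le_of_norm_le_const hbd
    simpa using this
  have hibp1 := fCoeff_by_parts f hper hdiff hcont' k hk0
  have hibp2 := fCoeff_by_parts (deriv f) hper' hdiff' hcont'' k hk0
  rw [hibp1, hibp2]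
  have hnorm : ‖(2 * (Real.pi : ℂ) * Complex.I * (k : ℂ))⁻¹‖ ≤ 1 / (k:ℝ) := by
    rw [norm_inv]
    have h1 : ‖2 * (Real.pi : ℂ) * Complex.I * (k : ℂ)‖ = 2 * Real.pi * (k:ℝ) := by
      simp only [norm_mul, Complex.norm_I, Complex.norm_two,
        Complex.norm_real, Complex.norm_intCast, Real.norm_eq_abs]
      rw [_root_.abs_of_nonneg Real.pi_pos.le, _root_.abs_of_nonneg (by linarith : (0:ℝ) ≤ (k:ℝ))]
      push_cast
      ring
    rw [h1, one_div]
    apply inv_anti₀ (by linarith)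
    nlinarith [Real.pi_gt_three]
  calc ‖(2 * (Real.pi : ℂ) * Complex.I * (k : ℂ))⁻¹ *
        ((2 * (Real.pi : ℂ) * Complex.I * (k : ℂ))⁻¹ * fCoeff (deriv (deriv f)) k)‖
      = ‖(2 * (Real.pi : ℂ) * Complex.I * (k : ℂ))⁻¹‖ *
        (‖(2 * (Real.pi : ℂ) * Complex.I * (k : ℂ))⁻¹‖ * ‖fCoeff (deriv (deriv f)) k‖) := by
        rw [norm_mul, norm_mul]
    _ ≤ (1 / (k:ℝ)) * ((1 / (k:ℝ)) * M) := by
        apply mul_le_mul hnorm ?_ (by positivity) (by positivity)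
        apply mul_le_mul hnorm hcoeff2 (norm_nonneg _) (by positivity)
    _ = M / (k:ℝ) ^ 2 := by
        have hkne : (k:ℝ) ≠ 0 := by linarith
        field_simp
    _ ≤ (M + 1) / (k:ℝ) ^ 2 := by
        gcongr
        linarith
  

lemma gFun_nonneg (f : ℝ → ℂ) (x : ℝ) : 0 ≤ gFun f x := by
  apply tsum_nonneg
  intro n
  split <;> positivity

lemma gFun_bounds (f : ℝ → ℂ) (hper : Function.Periodic f 1) (hf : ContDiff ℝ 2 f) :
    ∃ G : ℝ, Continuous (gFun f) ∧ ∀ x : ℝ, gFun f x ≤ G := by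
  obtain ⟨C, hC0, hC⟩ := fCoeff_decay f hper hf
  set e : ℕ → ℝ → ℂ := fun k x =>
    Complex.exp (2 * (Real.pi : ℂ) * Complex.I * (k : ℂ) * (x : ℂ)) with he
  set c : ℕ → ℕ → ℂ := fun n k => fCoeff f ((n : ℤ) * 2 ^ k) with hcdef
  have habs_e : ∀ (k : ℕ) (x : ℝ), ‖e k x‖ = 1 := by
    intro k x
    have hre : (2 * (Real.pi : ℂ) * Complex.I * (k : ℂ) * (x : ℂ)).re = 0 := by
      simp [Complex.mul_re, Complex.mul_im]
    rw [he]
    rw [Complex.norm_exp, hre, Real.exp_zero]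
  have hcb : ∀ n : ℕ, Odd n → ∀ k : ℕ, ‖c n k‖ ≤ C / (n:ℝ)^2 * (1/4)^k := by
    intro n hn k
    have hn1 : 1 ≤ n := Nat.one_le_iff_ne_zero.mpr (by rintro rfl; simp at hn)
    have hk1 : (1:ℤ) ≤ (n : ℤ) * 2 ^ k := by
      have h1 : (1:ℤ) ≤ (n:ℤ) := by exact_mod_cast hn1
      have h2 : (1:ℤ) ≤ 2 ^ k := one_le_pow₀ (by norm_num)
      nlinarith
    have := hC ((n : ℤ) * 2 ^ k) hk1
    rw [hcdef]
    apply this.trans_eq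
    have hcast : (((n : ℤ) * 2 ^ k : ℤ) : ℝ) = (n:ℝ) * 2 ^ k := by push_cast; ring
    rw [hcast]
    have h4 : ((2:ℝ)^k)^2 = 4^k := by
      rw [← pow_mul, mul_comm, pow_mul]
      norm_num
    have hnne : (n:ℝ) ≠ 0 := by positivity
    rw [mul_pow, h4]
    rw [div_mul_eq_mul_div, div_eq_div_iff (by positivity) (by positivity)]
    field_simp
    rw [← mul_pow]; norm_num
  have hsum_u : ∀ n : ℕ, Summable (fun k : ℕ => C / (n:ℝ)^2 * (1/4)^k) := by
    intro n
    exact (summable_geometric_of_lt_one (by norm_num) (by norm_num)).mul_left _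
  have htsum_u : ∀ n : ℕ, (∑' k : ℕ, C / (n:ℝ)^2 * (1/4)^k) = C / (n:ℝ)^2 * (4/3) := by
    intro n
    rw [tsum_mul_left, tsum_geometric_of_lt_one (by norm_num) (by norm_num)]
    norm_num
  have hecont : ∀ k : ℕ, Continuous (fun x : ℝ => e k x) := by
    intro k
    apply Complex.continuous_exp.comp
    fun_prop
  have hsumc : ∀ (n : ℕ), Odd n → Summable (fun k : ℕ => ‖c n k‖) := by
    intro n hn
    exact (hsum_u n).of_nonneg_of_le (fun k => norm_nonneg _) (hcb n hn)
  have hnorm_h : ∀ (n : ℕ), Odd n → ∀ x : ℝ,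
      ‖∑' k : ℕ, c n k * e k x‖ ≤ C / (n:ℝ)^2 * (4/3) := by
    intro n hn x
    have h1 : Summable (fun k : ℕ => ‖c n k * e k x‖) := by
      apply Summable.congr (hsumc n hn)
      intro k
      rw [norm_mul, habs_e, mul_one]
    calc ‖∑' k : ℕ, c n k * e k x‖ ≤ ∑' k : ℕ, ‖c n k * e k x‖ := norm_tsum_le_tsum_norm h1
      _ ≤ ∑' k : ℕ, C / (n:ℝ)^2 * (1/4)^k := by
          apply Summable.tsum_le_tsum ?_ h1 (hsum_u n)
          intro k
          rw [norm_mul, habs_e, mul_one]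
          exact hcb n hn k
      _ = C / (n:ℝ)^2 * (4/3) := htsum_u n
  set w : ℕ → ℝ := fun n => if Odd n then (4*C/3)^2 / (n:ℝ)^4 else 0 with hw
  have hw0 : ∀ n, 0 ≤ w n := by
    intro n; rw [hw]; dsimp only; split <;> positivity
  have hsumw : Summable w := by
    apply Summable.of_nonneg_of_le hw0 ?_
      ((Real.summable_one_div_nat_pow.mpr (by norm_num : 2 ≤ 4)).mul_left ((4*C/3)^2))
    intro n
    rw [hw]
    dsimp only
    split
    · rw [mul_one_div]
    · positivity
  have hbd : ∀ (n : ℕ) (x : ℝ),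
      ‖(if Odd n then ‖∑' k : ℕ, c n k * e k x‖ ^ 2 else 0)‖ ≤ w n := by
    intro n x
    rw [hw]
    dsimp only
    by_cases hn : Odd n
    · rw [if_pos hn, if_pos hn, Real.norm_of_nonneg (by positivity)]
      have h1 := hnorm_h n hn x
      have h2 : ‖∑' k : ℕ, c n k * e k x‖ ^ 2 ≤ (C / (n:ℝ)^2 * (4/3)) ^ 2 :=
        pow_le_pow_left₀ (norm_nonneg _) h1 2
      apply h2.trans_eq
      have hnne : (n:ℝ) ≠ 0 := by
        have hn1 : 1 ≤ n := Nat.one_le_iff_ne_zero.mpr (by rintro rfl; simp at hn)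
        positivity
      field_simp
    · rw [if_neg hn, if_neg hn, norm_zero]
  have htermcont : ∀ n : ℕ,
      Continuous (fun x : ℝ => if Odd n then ‖∑' k : ℕ, c n k * e k x‖ ^ 2 else 0) := by
    intro n
    by_cases hn : Odd n
    · simp only [if_pos hn]
      apply Continuous.pow
      apply Continuous.norm
      apply continuous_tsum (fun k => (continuous_const.mul (hecont k))) (hsum_u n)
      intro k x
      simp only [Pi.mul_apply]
      rw [norm_mul, habs_e, mul_one]
      exact hcb n hn k
    · simp only [if_neg hn]
      exact continuous_const
  have heq : gFun f = fun x => ∑' n : ℕ,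
      (if Odd n then ‖∑' k : ℕ, c n k * e k x‖ ^ 2 else 0) := rfl
  refine ⟨∑' n, w n, ?_, ?_⟩
  · rw [heq]
    exact continuous_tsum htermcont hsumw hbd
  · intro x
    rw [heq]
    apply Summable.tsum_le_tsum ?_ ?_ hsumw
    · intro n
      have := hbd n x
      rw [Real.norm_of_nonneg (by split <;> positivity)] at this
      exact this
    · apply Summable.of_nonneg_of_le (fun n => by split <;> positivity) ?_ hsumw
      intro n
      have := hbd n x
      rwa [Real.norm_of_nonneg (by split <;> positivity)] at this

end
end Stmt0Proof

theorem stmt_0 (f : ℝ → ℂ) (hf : Admissible f) (z : ℂ) (hz : 0 < z.im) :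
    ∃! m : ℂ, 0 < m.im ∧
      (∫ x in (0:ℝ)..1, (((gFun f x : ℝ) : ℂ) * m + z)⁻¹) = -m := by
  obtain ⟨hper, hC2, -, -⟩ := hf
  obtain ⟨G, hgc, hGub⟩ := gFun_bounds f hper hC2
  exact master hgc (gFun_nonneg f) hGub hz
end

section
/- Let f be an admissible evaluation function and suppose N ≥ 2 is such that the Hermitian Toeplitz matrix Φ^N is positive definite (which holds for all sufficiently large N). Then for every z ∈ ℂ with Im z > 0 there exists exactly one M ∈ ℂ with Im M > 0 such that M·Φ^N + z·1 is invertible and M = −N^{−1} Tr((M·Φ^N + z·1)^{−1}); equivalently, M solves −M^{−1} m_{Φ^N}(−z/M) = M, where m_{Φ^N}(w) = N^{−1} Tr((Φ^N − w·1)^{−1}). -/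
open MeasureTheory Complex Filter ProbabilityTheory Matrix
open scoped ENNReal NNReal ComplexOrder

/- ### Auxiliary development for stmt_16 ### -/
namespace Stmt16Aux
open Finset Matrix
noncomputable section

lemma matrix_resolvent {N : ℕ} (Φ : Matrix (Fin N) (Fin N) ℂ) (h : Φ.IsHermitian)
    (M z : ℂ) (hw : ∀ i, M * (h.eigenvalues i : ℂ) + z ≠ 0) :
    IsUnit (M • Φ + z • (1 : Matrix (Fin N) (Fin N) ℂ)) ∧
      Matrix.trace ((M • Φ + z • (1 : Matrix (Fin N) (Fin N) ℂ))⁻¹)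
        = ∑ i, (M * (h.eigenvalues i : ℂ) + z)⁻¹ := by
  set U : Matrix (Fin N) (Fin N) ℂ := (h.eigenvectorUnitary : Matrix (Fin N) (Fin N) ℂ) with hU
  have hUU : star U * U = 1 := Unitary.coe_star_mul_self h.eigenvectorUnitary
  have hUU' : U * star U = 1 := Unitary.coe_mul_star_self h.eigenvectorUnitary
  have hdiag : (Matrix.diagonal fun i => M * (h.eigenvalues i : ℂ) + z)
      = M • Matrix.diagonal (RCLike.ofReal ∘ h.eigenvalues) + z • 1 := by
    ext i j
    by_cases hij : i = j <;>
      simp [Matrix.diagonal_apply, Matrix.one_apply, hij, Function.comp]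
  have key : M • Φ + z • (1 : Matrix (Fin N) (Fin N) ℂ)
      = U * (Matrix.diagonal fun i => M * (h.eigenvalues i : ℂ) + z) * star U := by
    conv_lhs => rw [h.spectral_theorem]
    rw [hdiag]
    simp only [Matrix.mul_add, Matrix.add_mul, Matrix.mul_smul, Matrix.smul_mul,
      Matrix.mul_one, hUU', Unitary.conjStarAlgAut_apply, Unitary.coe_star, ← hU]
  set B := U * (Matrix.diagonal fun i => (M * (h.eigenvalues i : ℂ) + z)⁻¹) * star U with hB
  have hDD : (Matrix.diagonal fun i => M * (h.eigenvalues i : ℂ) + z)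
      * (Matrix.diagonal fun i => (M * (h.eigenvalues i : ℂ) + z)⁻¹) = 1 := by
    rw [Matrix.diagonal_mul_diagonal]
    convert Matrix.diagonal_one using 2
    exact funext fun i => mul_inv_cancel₀ (hw i)
  have hAB : (M • Φ + z • (1 : Matrix (Fin N) (Fin N) ℂ)) * B = 1 := by
    rw [key, hB]
    calc (U * (Matrix.diagonal fun i => M * (h.eigenvalues i : ℂ) + z) * star U) *
          (U * (Matrix.diagonal fun i => (M * (h.eigenvalues i : ℂ) + z)⁻¹) * star U)
        = U * (Matrix.diagonal fun i => M * (h.eigenvalues i : ℂ) + z) * (star U * U) *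
          (Matrix.diagonal fun i => (M * (h.eigenvalues i : ℂ) + z)⁻¹) * star U := by
          noncomm_ring
      _ = 1 := by rw [hUU, Matrix.mul_one, Matrix.mul_assoc U, hDD, Matrix.mul_one, hUU']
  have hBA : B * (M • Φ + z • (1 : Matrix (Fin N) (Fin N) ℂ)) = 1 :=
    mul_eq_one_comm.mp hAB
  refine ⟨⟨⟨_, B, hAB, hBA⟩, rfl⟩, ?_⟩
  rw [Matrix.inv_eq_right_inv hAB, hB, Matrix.trace_mul_cycle, hUU, Matrix.one_mul,
    Matrix.trace_diagonal]

def Fsc {N : ℕ} (lam : Fin N → ℝ) (z : ℂ) (M : ℂ) : ℂ :=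
  -(N:ℂ)⁻¹ * ∑ i, (M * (lam i : ℂ) + z)⁻¹

def ssc {N : ℕ} (lam : Fin N → ℝ) (z : ℂ) (M : ℂ) : ℝ :=
  (N:ℝ)⁻¹ * ∑ i, lam i / Complex.normSq (M * (lam i : ℂ) + z)

def tsc {N : ℕ} (lam : Fin N → ℝ) (z : ℂ) (M : ℂ) : ℝ :=
  (N:ℝ)⁻¹ * ∑ i, 1 / Complex.normSq (M * (lam i : ℂ) + z)

lemma wim {N : ℕ} (lam : Fin N → ℝ) (z M : ℂ) (i : Fin N) :
    (M * (lam i : ℂ) + z).im = M.im * lam i + z.im := by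
  simp [Complex.add_im, Complex.mul_im]

lemma wim_pos {N : ℕ} {lam : Fin N → ℝ} (hlam : ∀ i, 0 < lam i) {z : ℂ} (hz : 0 < z.im)
    {M : ℂ} (hM : 0 ≤ M.im) (i : Fin N) : 0 < (M * (lam i : ℂ) + z).im := by
  rw [wim]
  have := (hlam i).le
  nlinarith

lemma wne {N : ℕ} {lam : Fin N → ℝ} (hlam : ∀ i, 0 < lam i) {z : ℂ} (hz : 0 < z.im)
    {M : ℂ} (hM : 0 ≤ M.im) (i : Fin N) : M * (lam i : ℂ) + z ≠ 0 := by
  intro h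
  have := wim_pos hlam hz hM i
  rw [h] at this
  simp at this

lemma Fim_split {N : ℕ} (lam : Fin N → ℝ) (z M : ℂ) :
    (Fsc lam z M).im = M.im * ssc lam z M + z.im * tsc lam z M := by
  unfold Fsc ssc tsc
  have hcast : -(N:ℂ)⁻¹ = ((-(N:ℝ)⁻¹ : ℝ) : ℂ) := by push_cast; ring
  rw [hcast, Complex.im_ofReal_mul, Complex.im_sum]
  simp_rw [Complex.inv_im, wim]
  have h : ∀ i : Fin N, -(M.im * lam i + z.im) / Complex.normSq (M * (lam i : ℂ) + z)
      = -(M.im * (lam i / Complex.normSq (M * (lam i : ℂ) + z))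
        + z.im * (1 / Complex.normSq (M * (lam i : ℂ) + z))) := by
    intro i; ring
  simp_rw [h]
  rw [Finset.sum_neg_distrib, Finset.sum_add_distrib, ← Finset.mul_sum, ← Finset.mul_sum]
  ring

lemma ssc_nonneg {N : ℕ} {lam : Fin N → ℝ} (hlam : ∀ i, 0 < lam i) (z M : ℂ) :
    0 ≤ ssc lam z M := by
  unfold ssc
  have : ∀ i ∈ Finset.univ (α := Fin N),
      0 ≤ lam i / Complex.normSq (M * (lam i : ℂ) + z) := fun i _ =>
    div_nonneg (hlam i).le (Complex.normSq_nonneg _)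
  exact mul_nonneg (by positivity) (Finset.sum_nonneg this)

lemma abs_Fsc_le {N : ℕ} (hN : 0 < N) {lam : Fin N → ℝ} (hlam : ∀ i, 0 < lam i)
    {z : ℂ} (hz : 0 < z.im) {M : ℂ} (hM : 0 ≤ M.im) :
    ‖Fsc lam z M‖ ≤ (z.im)⁻¹ := by
  unfold Fsc
  rw [norm_mul, norm_neg, norm_inv]
  have h1 : ‖(N : ℂ)‖ = (N : ℝ) := by simp
  rw [h1]
  have h2 : ∀ i : Fin N, ‖(M * (lam i : ℂ) + z)⁻¹‖ ≤ (z.im)⁻¹ := by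
    intro i
    rw [norm_inv]
    have him := wim_pos hlam hz hM i
    have hle : z.im ≤ ‖M * (lam i : ℂ) + z‖ := by
      have := Complex.im_le_norm (M * (lam i : ℂ) + z)
      have := wim lam z M i
      nlinarith [(hlam i).le, mul_nonneg hM (hlam i).le]
    exact inv_anti₀ hz hle
  have h3 : ‖∑ i, (M * (lam i : ℂ) + z)⁻¹‖ ≤ (N : ℝ) * (z.im)⁻¹ := by
    calc ‖∑ i, (M * (lam i : ℂ) + z)⁻¹‖ ≤ ∑ i, ‖(M * (lam i : ℂ) + z)⁻¹‖ := by
          exact norm_sum_le Finset.univ (fun i => (M * (lam i : ℂ) + z)⁻¹)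
      _ ≤ ∑ _i : Fin N, (z.im)⁻¹ := Finset.sum_le_sum fun i _ => h2 i
      _ = (N : ℝ) * (z.im)⁻¹ := by simp [mul_comm]
  calc (N : ℝ)⁻¹ * ‖∑ i, (M * (lam i : ℂ) + z)⁻¹‖
      ≤ (N : ℝ)⁻¹ * ((N : ℝ) * (z.im)⁻¹) := by
        apply mul_le_mul_of_nonneg_left h3 (by positivity)
    _ = (z.im)⁻¹ := by
        field_simp

lemma cs_bound {N : ℕ} {lam : Fin N → ℝ} (hlam : ∀ i, 0 < lam i) (z : ℂ)
    {M₁ M₂ : ℂ} (h1 : ∀ i, M₁ * (lam i : ℂ) + z ≠ 0) (h2 : ∀ i, M₂ * (lam i : ℂ) + z ≠ 0) :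
    ‖Fsc lam z M₁ - Fsc lam z M₂‖ ≤
      ‖M₁ - M₂‖ * (Real.sqrt (ssc lam z M₁) * Real.sqrt (ssc lam z M₂)) := by
  set w₁ : Fin N → ℂ := fun i => M₁ * (lam i : ℂ) + z with hw₁
  set w₂ : Fin N → ℂ := fun i => M₂ * (lam i : ℂ) + z with hw₂
  have hterm : ∀ i, (w₁ i)⁻¹ - (w₂ i)⁻¹ = (M₂ - M₁) * ((lam i : ℂ) * ((w₁ i)⁻¹ * (w₂ i)⁻¹)) := by
    intro i
    have e1 := h1 i; have e2 := h2 i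
    rw [hw₁, hw₂]
    rw [inv_sub_inv e1 e2, div_eq_mul_inv, mul_inv]
    ring
  have key : Fsc lam z M₁ - Fsc lam z M₂
      = (M₁ - M₂) * ((N:ℂ)⁻¹ * ∑ i, (lam i : ℂ) * ((w₁ i)⁻¹ * (w₂ i)⁻¹)) := by
    unfold Fsc
    rw [← mul_sub, ← Finset.sum_sub_distrib]
    simp_rw [show ∀ i, (M₁ * (lam i : ℂ) + z)⁻¹ - (M₂ * (lam i : ℂ) + z)⁻¹ = (M₂ - M₁) * ((lam i : ℂ) * ((w₁ i)⁻¹ * (w₂ i)⁻¹)) from hterm]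
    rw [← Finset.mul_sum]
    ring
  rw [key, norm_mul]
  apply mul_le_mul_of_nonneg_left _ (norm_nonneg _)
  -- bound abs((N)⁻¹ * Σ λ w₁⁻¹ w₂⁻¹) by √s₁ √s₂
  rw [norm_mul, norm_inv]
  have h1' : ‖(N : ℂ)‖ = (N : ℝ) := by simp
  rw [h1']
  have habs_term : ∀ i : Fin N, ‖(lam i : ℂ) * ((w₁ i)⁻¹ * (w₂ i)⁻¹)‖
      = Real.sqrt (lam i / Complex.normSq (w₁ i)) * Real.sqrt (lam i / Complex.normSq (w₂ i)) := by
    intro i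
    rw [norm_mul, norm_mul, norm_inv, norm_inv, Complex.norm_real, Real.norm_eq_abs, abs_of_pos (hlam i)]
    rw [← Real.sqrt_mul (div_nonneg (hlam i).le (Complex.normSq_nonneg _))]
    have hrad : lam i / Complex.normSq (w₁ i) * (lam i / Complex.normSq (w₂ i))
        = (lam i * ((‖w₁ i‖)⁻¹ * (‖w₂ i‖)⁻¹)) ^ 2 := by
      rw [← Complex.sq_norm, ← Complex.sq_norm]
      have a1 : ‖w₁ i‖ ≠ 0 := by simpa using h1 i
      have a2 : ‖w₂ i‖ ≠ 0 := by simpa using h2 i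
      field_simp
    rw [hrad, Real.sqrt_sq (mul_nonneg (hlam i).le (by positivity))]
  have hCS : ∑ i : Fin N, Real.sqrt (lam i / Complex.normSq (w₁ i)) *
        Real.sqrt (lam i / Complex.normSq (w₂ i))
      ≤ Real.sqrt (∑ i, lam i / Complex.normSq (w₁ i)) *
        Real.sqrt (∑ i, lam i / Complex.normSq (w₂ i)) :=
    Real.sum_sqrt_mul_sqrt_le _ (fun i => div_nonneg (hlam i).le (Complex.normSq_nonneg _))
      (fun i => div_nonneg (hlam i).le (Complex.normSq_nonneg _))
  have habs_sum : ‖∑ i, (lam i : ℂ) * ((w₁ i)⁻¹ * (w₂ i)⁻¹)‖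
      ≤ Real.sqrt (∑ i, lam i / Complex.normSq (w₁ i)) *
        Real.sqrt (∑ i, lam i / Complex.normSq (w₂ i)) := by
    calc ‖∑ i, (lam i : ℂ) * ((w₁ i)⁻¹ * (w₂ i)⁻¹)‖
        ≤ ∑ i, ‖(lam i : ℂ) * ((w₁ i)⁻¹ * (w₂ i)⁻¹)‖ := by
          exact
            norm_sum_le Finset.univ (fun i => (lam i : ℂ) * ((w₁ i)⁻¹ * (w₂ i)⁻¹))
      _ = ∑ i : Fin N, Real.sqrt (lam i / Complex.normSq (w₁ i)) *
            Real.sqrt (lam i / Complex.normSq (w₂ i)) := Finset.sum_congr rfl fun i _ => habs_term i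
      _ ≤ _ := hCS
  unfold ssc
  rw [Real.sqrt_mul (by positivity : (0:ℝ) ≤ (N:ℝ)⁻¹),
    Real.sqrt_mul (by positivity : (0:ℝ) ≤ (N:ℝ)⁻¹)]
  calc (N:ℝ)⁻¹ * ‖∑ i, (lam i : ℂ) * ((w₁ i)⁻¹ * (w₂ i)⁻¹)‖
      ≤ (N:ℝ)⁻¹ * (Real.sqrt (∑ i, lam i / Complex.normSq (w₁ i)) *
          Real.sqrt (∑ i, lam i / Complex.normSq (w₂ i))) :=
        mul_le_mul_of_nonneg_left habs_sum (by positivity)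
    _ = Real.sqrt ((N:ℝ)⁻¹) * Real.sqrt (∑ i, lam i / Complex.normSq (w₁ i)) *
          (Real.sqrt ((N:ℝ)⁻¹) * Real.sqrt (∑ i, lam i / Complex.normSq (w₂ i))) := by
        rw [show Real.sqrt ((N:ℝ)⁻¹) * Real.sqrt (∑ i, lam i / Complex.normSq (w₁ i)) *
            (Real.sqrt ((N:ℝ)⁻¹) * Real.sqrt (∑ i, lam i / Complex.normSq (w₂ i)))
          = Real.sqrt ((N:ℝ)⁻¹) * Real.sqrt ((N:ℝ)⁻¹) *
            (Real.sqrt (∑ i, lam i / Complex.normSq (w₁ i)) *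
             Real.sqrt (∑ i, lam i / Complex.normSq (w₂ i))) by ring,
          Real.mul_self_sqrt (by positivity)]

lemma tsc_pos {N : ℕ} (hN : 0 < N) (lam : Fin N → ℝ) (z : ℂ)
    {M : ℂ} (hw : ∀ i, M * (lam i : ℂ) + z ≠ 0) : 0 < tsc lam z M := by
  unfold tsc
  have : Nonempty (Fin N) := ⟨⟨0, hN⟩⟩
  apply mul_pos (by positivity)
  apply Finset.sum_pos (fun i _ => _) Finset.univ_nonempty
  intro i _
  have := Complex.normSq_pos.mpr (hw i)
  positivity

lemma step_lemma {N : ℕ} (hN : 0 < N) {lam : Fin N → ℝ} (hlam : ∀ i, 0 < lam i)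
    {z : ℂ} (hz : 0 < z.im) {c q : ℝ}
    (hc : c = z.im / ((∑ i, lam i) * (z.im)⁻¹ + ‖z‖) ^ 2)
    (hcpos : 0 < c)
    (hq : q = 1 - c * z.im) {M : ℂ} (hMim : c ≤ M.im) (hMabs : ‖M‖ ≤ (z.im)⁻¹) :
    c ≤ (Fsc lam z M).im ∧ ‖Fsc lam z M‖ ≤ (z.im)⁻¹ ∧
      M.im * ssc lam z M ≤ q * (Fsc lam z M).im := by
  have hM0 : 0 ≤ M.im := le_trans hcpos.le hMim
  set Bc := (∑ i, lam i) * (z.im)⁻¹ + ‖z‖ with hBc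
  have habsz : 0 < ‖z‖ := lt_of_lt_of_le hz (Complex.im_le_norm z)
  have hΛ : 0 ≤ (∑ i, lam i) := Finset.sum_nonneg fun i _ => (hlam i).le
  have hBcpos : 0 < Bc := by
    rw [hBc]; positivity
  -- upper bound on |w i|
  have hwle : ∀ i, ‖M * (lam i : ℂ) + z‖ ≤ Bc := by
    intro i
    calc ‖M * (lam i : ℂ) + z‖
        ≤ ‖M * (lam i : ℂ)‖ + ‖z‖ := norm_add_le _ _
      _ = ‖M‖ * lam i + ‖z‖ := by
          rw [norm_mul, Complex.norm_real, Real.norm_eq_abs, abs_of_pos (hlam i)]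
      _ ≤ (z.im)⁻¹ * (∑ i, lam i) + ‖z‖ := by
          have hle : lam i ≤ ∑ j, lam j :=
            Finset.single_le_sum (fun j _ => (hlam j).le) (Finset.mem_univ i)
          have := mul_le_mul hMabs hle (hlam i).le (by positivity)
          linarith
      _ = Bc := by rw [hBc]; ring
  -- lower bound on tsc
  have htsc : c ≤ z.im * tsc lam z M := by
    have h1 : ∀ i : Fin N, (Bc ^ 2)⁻¹ ≤ 1 / Complex.normSq (M * (lam i : ℂ) + z) := by
      intro i
      have hne := wne hlam hz hM0 i
      have hpos := Complex.normSq_pos.mpr hne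
      rw [one_div]
      apply inv_anti₀ hpos
      rw [← Complex.sq_norm]
      exact pow_le_pow_left₀ (norm_nonneg _) (hwle i) 2
    have h2 : (Bc ^ 2)⁻¹ ≤ tsc lam z M := by
      unfold tsc
      calc (Bc ^ 2)⁻¹ = (N : ℝ)⁻¹ * ((N : ℝ) * (Bc ^ 2)⁻¹) := by
            field_simp
        _ ≤ (N : ℝ)⁻¹ * ∑ i, 1 / Complex.normSq (M * (lam i : ℂ) + z) := by
            apply mul_le_mul_of_nonneg_left _ (by positivity)
            calc (N : ℝ) * (Bc ^ 2)⁻¹ = ∑ _i : Fin N, (Bc ^ 2)⁻¹ := by simp [mul_comm]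
              _ ≤ _ := Finset.sum_le_sum fun i _ => h1 i
    calc c = z.im * (Bc ^ 2)⁻¹ := by rw [hc, hBc, div_eq_mul_inv]
      _ ≤ z.im * tsc lam z M := mul_le_mul_of_nonneg_left h2 hz.le
  have hsplit := Fim_split lam z M
  have hs0 := ssc_nonneg hlam z M
  have hFim : c ≤ (Fsc lam z M).im := by nlinarith
  have hFabs := abs_Fsc_le hN hlam hz hM0
  refine ⟨hFim, hFabs, ?_⟩
  have hFimR : (Fsc lam z M).im ≤ (z.im)⁻¹ := le_trans (Complex.im_le_norm _) hFabs
  have hzF : z.im * (Fsc lam z M).im ≤ 1 := by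
    have := mul_le_mul_of_nonneg_left hFimR hz.le
    rwa [mul_inv_cancel₀ (ne_of_gt hz)] at this
  rw [hq]
  nlinarith

lemma scalar_exists_unique {N : ℕ} (hN : 0 < N) {lam : Fin N → ℝ} (hlam : ∀ i, 0 < lam i)
    {z : ℂ} (hz : 0 < z.im) :
    ∃! M : ℂ, 0 < M.im ∧ M = Fsc lam z M := by
  have habsz : 0 < ‖z‖ := lt_of_lt_of_le hz (Complex.im_le_norm z)
  have hΛ : 0 ≤ (∑ i, lam i) := Finset.sum_nonneg fun i _ => (hlam i).le
  set R : ℝ := (z.im)⁻¹ with hR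
  have hRpos : 0 < R := by rw [hR]; positivity
  set Bc : ℝ := (∑ i, lam i) * (z.im)⁻¹ + ‖z‖ with hBc
  have hBcpos : 0 < Bc := by rw [hBc]; positivity
  have hzBc : z.im ≤ Bc := by
    rw [hBc]
    have := Complex.im_le_norm z
    nlinarith [mul_nonneg hΛ (inv_nonneg.mpr hz.le)]
  set c : ℝ := z.im / Bc ^ 2 with hc
  have hcpos : 0 < c := by rw [hc]; positivity
  have hcR : c ≤ R := by
    rw [hc, hR]
    rw [div_le_iff₀ (by positivity)]
    have h2 : z.im ^ 2 ≤ Bc ^ 2 := by nlinarith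
    have h3 : (z.im)⁻¹ * z.im ^ 2 = z.im := by field_simp
    nlinarith [mul_le_mul_of_nonneg_left h2 (inv_nonneg.mpr hz.le)]
  set q : ℝ := 1 - c * z.im with hq
  have hq1 : q < 1 := by rw [hq]; nlinarith
  have hq0 : 0 ≤ q := by
    rw [hq]
    have : c * z.im ≤ R * z.im := mul_le_mul_of_nonneg_right hcR hz.le
    rw [hR, inv_mul_cancel₀ (ne_of_gt hz)] at this
    linarith
  have hstep : ∀ M : ℂ, c ≤ M.im → ‖M‖ ≤ R →
      c ≤ (Fsc lam z M).im ∧ ‖Fsc lam z M‖ ≤ R ∧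
        M.im * ssc lam z M ≤ q * (Fsc lam z M).im := fun M h1 h2 =>
    step_lemma hN hlam hz (by rw [hc, hBc]) hcpos (by rw [hq]) h1 h2
  -- the iteration sequence
  set M₀ : ℂ := Complex.I * (c : ℂ) with hM₀
  have hM₀im : M₀.im = c := by simp [hM₀]
  have hM₀abs : ‖M₀‖ ≤ R := by
    rw [hM₀, norm_mul, Complex.norm_I, one_mul, Complex.norm_real, Real.norm_eq_abs, abs_of_pos hcpos]
    exact hcR
  set u : ℕ → ℂ := fun n => (Fsc lam z)^[n] M₀ with hu
  have hsucc : ∀ n, u (n + 1) = Fsc lam z (u n) := fun n => Function.iterate_succ_apply' _ _ _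
  have hu0 : u 0 = M₀ := rfl
  have hmem : ∀ n, c ≤ (u n).im ∧ ‖u n‖ ≤ R := by
    intro n
    induction n with
    | zero => rw [hu0]; exact ⟨le_of_eq hM₀im.symm, hM₀abs⟩
    | succ n ih =>
      rw [hsucc]
      exact ⟨(hstep _ ih.1 ih.2).1, (hstep _ ih.1 ih.2).2.1⟩
  have himpos : ∀ n, 0 < (u n).im := fun n => lt_of_lt_of_le hcpos (hmem n).1
  have hwnz : ∀ n i, u n * (lam i : ℂ) + z ≠ 0 := fun n i => wne hlam hz (himpos n).le i
  have him_le : ∀ n, (u n).im ≤ R := fun n => le_trans (Complex.im_le_norm _) (hmem n).2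
  have hsr : ∀ n, Real.sqrt (ssc lam z (u n)) ≤ Real.sqrt (q * (u (n + 1)).im / (u n).im) := by
    intro n
    apply Real.sqrt_le_sqrt
    rw [le_div_iff₀ (himpos n)]
    have h := (hstep _ (hmem n).1 (hmem n).2).2.2
    rw [← hsucc n] at h
    nlinarith
  set d : ℕ → ℝ := fun n => ‖u n - u (n + 1)‖ with hd
  have hd0 : ∀ n, 0 ≤ d n := fun n => norm_nonneg _
  have hclaim : ∀ n, d n ≤ q ^ n * (d 0 / c) * Real.sqrt ((u n).im * (u (n + 1)).im) := by
    intro n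
    induction n with
    | zero =>
      have h1 : c ≤ Real.sqrt ((u 0).im * (u 1).im) := by
        rw [show c = Real.sqrt (c * c) from (Real.sqrt_mul_self hcpos.le).symm]
        apply Real.sqrt_le_sqrt
        exact mul_le_mul (hmem 0).1 (hmem 1).1 hcpos.le (himpos 0).le
      calc d 0 = d 0 / c * c := by field_simp
        _ ≤ d 0 / c * Real.sqrt ((u 0).im * (u 1).im) :=
            mul_le_mul_of_nonneg_left h1 (div_nonneg (hd0 0) hcpos.le)
        _ = q ^ 0 * (d 0 / c) * Real.sqrt ((u 0).im * (u 1).im) := by ring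
    | succ n ih =>
      have e2 : d (n + 1) ≤ d n * (Real.sqrt (ssc lam z (u n)) * Real.sqrt (ssc lam z (u (n + 1)))) := by
        have := cs_bound hlam z (hwnz n) (hwnz (n + 1))
        rw [hd]
        simp only
        conv_lhs => rw [hsucc n, hsucc (n + 1)]
        exact this
      have e3 : Real.sqrt (ssc lam z (u n)) * Real.sqrt (ssc lam z (u (n + 1)))
          ≤ Real.sqrt (q * (u (n + 1)).im / (u n).im) *
            Real.sqrt (q * (u (n + 2)).im / (u (n + 1)).im) :=
        mul_le_mul (hsr n) (hsr (n + 1)) (Real.sqrt_nonneg _) (Real.sqrt_nonneg _)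
      have halg : Real.sqrt ((u n).im * (u (n + 1)).im) *
            (Real.sqrt (q * (u (n + 1)).im / (u n).im) *
             Real.sqrt (q * (u (n + 2)).im / (u (n + 1)).im))
          = q * Real.sqrt ((u (n + 1)).im * (u (n + 2)).im) := by
        have ha := himpos n
        have hb := himpos (n + 1)
        have he := himpos (n + 2)
        rw [← Real.sqrt_mul (by positivity), ← Real.sqrt_mul (by positivity)]
        rw [show (u n).im * (u (n + 1)).im *
              (q * (u (n + 1)).im / (u n).im * (q * (u (n + 2)).im / (u (n + 1)).im))
            = q ^ 2 * ((u (n + 1)).im * (u (n + 2)).im) by field_simp]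
        rw [Real.sqrt_mul (by positivity), Real.sqrt_sq hq0]
      calc d (n + 1) ≤ d n * (Real.sqrt (ssc lam z (u n)) * Real.sqrt (ssc lam z (u (n + 1)))) := e2
        _ ≤ (q ^ n * (d 0 / c) * Real.sqrt ((u n).im * (u (n + 1)).im)) *
            (Real.sqrt (q * (u (n + 1)).im / (u n).im) *
             Real.sqrt (q * (u (n + 2)).im / (u (n + 1)).im)) := by
            apply mul_le_mul ih e3 (by positivity)
            exact mul_nonneg (mul_nonneg (pow_nonneg hq0 n) (div_nonneg (hd0 0) hcpos.le))
              (Real.sqrt_nonneg _)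
        _ = q ^ n * (d 0 / c) * (Real.sqrt ((u n).im * (u (n + 1)).im) *
            (Real.sqrt (q * (u (n + 1)).im / (u n).im) *
             Real.sqrt (q * (u (n + 2)).im / (u (n + 1)).im))) := by ring
        _ = q ^ (n + 1) * (d 0 / c) * Real.sqrt ((u (n + 1)).im * (u (n + 2)).im) := by
            rw [halg]; ring
  have hgeo : ∀ n, dist (u n) (u (n + 1)) ≤ d 0 / c * R * q ^ n := by
    intro n
    rw [Complex.dist_eq]
    have h2 : Real.sqrt ((u n).im * (u (n + 1)).im) ≤ R := by
      rw [show R = Real.sqrt (R * R) from (Real.sqrt_mul_self hRpos.le).symm]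
      apply Real.sqrt_le_sqrt
      exact mul_le_mul (him_le n) (him_le (n + 1)) (himpos (n + 1)).le hRpos.le
    calc ‖u n - u (n + 1)‖ ≤ q ^ n * (d 0 / c) * Real.sqrt ((u n).im * (u (n + 1)).im) :=
          hclaim n
      _ ≤ q ^ n * (d 0 / c) * R := by
          apply mul_le_mul_of_nonneg_left h2
          exact mul_nonneg (pow_nonneg hq0 n) (div_nonneg (hd0 0) hcpos.le)
      _ = d 0 / c * R * q ^ n := by ring
  have hcauchy : CauchySeq u := cauchySeq_of_le_geometric q (d 0 / c * R) hq1 hgeo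
  obtain ⟨Ms, hMs⟩ := cauchySeq_tendsto_of_complete hcauchy
  have hMsim : c ≤ Ms.im :=
    ge_of_tendsto' ((Complex.continuous_im.tendsto Ms).comp hMs) fun n => (hmem n).1
  have hMsim0 : 0 < Ms.im := lt_of_lt_of_le hcpos hMsim
  have hMsne : ∀ i, Ms * (lam i : ℂ) + z ≠ 0 := wne hlam hz hMsim0.le
  have hFcont : ContinuousAt (Fsc lam z) Ms := by
    apply ContinuousAt.mul continuousAt_const
    exact tendsto_finset_sum Finset.univ fun i _ =>
      ContinuousAt.inv₀ ((continuousAt_id.mul continuousAt_const).add continuousAt_const)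
        (hMsne i)
  have h1 : Filter.Tendsto (fun n => u (n + 1)) Filter.atTop (nhds Ms) :=
    hMs.comp (Filter.tendsto_add_atTop_nat 1)
  have h2 : Filter.Tendsto (fun n => Fsc lam z (u n)) Filter.atTop (nhds (Fsc lam z Ms)) :=
    hFcont.tendsto.comp hMs
  have hfix : Ms = Fsc lam z Ms := by
    apply tendsto_nhds_unique _ h2
    rwa [show (fun n => Fsc lam z (u n)) = fun n => u (n + 1) from funext fun n => (hsucc n).symm]
  -- the fixed point property implies ssc < 1
  have hslt : ∀ M : ℂ, 0 < M.im → M = Fsc lam z M → ssc lam z M < 1 := by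
    intro M hMim hfixM
    have ht : 0 < tsc lam z M := tsc_pos hN lam z (wne hlam hz hMim.le)
    have hsp := Fim_split lam z M
    rw [← hfixM] at hsp
    have hs0 := ssc_nonneg hlam z M
    nlinarith
  refine ⟨Ms, ⟨hMsim0, hfix⟩, ?_⟩
  rintro M' ⟨hM'im, hM'fix⟩
  by_contra hne'
  have hM'ne : ∀ i, M' * (lam i : ℂ) + z ≠ 0 := wne hlam hz hM'im.le
  have hd' : ‖M' - Ms‖ ≤
      ‖M' - Ms‖ * (Real.sqrt (ssc lam z M') * Real.sqrt (ssc lam z Ms)) := by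
    calc ‖M' - Ms‖ = ‖Fsc lam z M' - Fsc lam z Ms‖ := by
          rw [← hM'fix, ← hfix]
      _ ≤ _ := cs_bound hlam z hM'ne hMsne
  have l1 : Real.sqrt (ssc lam z M') < 1 := by
    rw [← Real.sqrt_one]
    exact Real.sqrt_lt_sqrt (ssc_nonneg hlam z M') (hslt M' hM'im hM'fix)
  have l2 : Real.sqrt (ssc lam z Ms) < 1 := by
    rw [← Real.sqrt_one]
    exact Real.sqrt_lt_sqrt (ssc_nonneg hlam z Ms) (hslt Ms hMsim0 hfix)
  have habs_pos : 0 < ‖M' - Ms‖ :=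
    norm_pos_iff.mpr (sub_ne_zero.mpr hne')
  have hxy : Real.sqrt (ssc lam z M') * Real.sqrt (ssc lam z Ms) < 1 := by
    have := mul_le_mul_of_nonneg_left l2.le (Real.sqrt_nonneg (ssc lam z M'))
    nlinarith
  have hfin := mul_lt_mul_of_pos_left hxy habs_pos
  nlinarith

end
end Stmt16Aux

theorem stmt_16 (f : ℝ → ℂ) (hf : Admissible f) (N : ℕ) (hN : 2 ≤ N)
    (hpos : (PhiN f N).PosDef) (z : ℂ) (hz : 0 < z.im) :
    ∃! M : ℂ, 0 < M.im ∧
      IsUnit (M • PhiN f N + z • (1 : Matrix (Fin N) (Fin N) ℂ)) ∧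
      M = -(N : ℂ)⁻¹ * Matrix.trace ((M • PhiN f N + z • (1 : Matrix (Fin N) (Fin N) ℂ))⁻¹) := by
  classical
  have hherm : (PhiN f N).IsHermitian := hpos.1
  set lam : Fin N → ℝ := hherm.eigenvalues with hlamdef
  have hlam : ∀ i, 0 < lam i := fun i => hpos.eigenvalues_pos i
  have hN0 : 0 < N := lt_of_lt_of_le two_pos hN
  obtain ⟨Ms, ⟨hMsim, hMsfix⟩, huniq⟩ := Stmt16Aux.scalar_exists_unique hN0 hlam hz
  have hwM : ∀ M : ℂ, 0 < M.im → ∀ i, M * (lam i : ℂ) + z ≠ 0 := fun M hM i =>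
    Stmt16Aux.wne hlam hz hM.le i
  refine ⟨Ms, ⟨hMsim, (Stmt16Aux.matrix_resolvent _ hherm Ms z (hwM Ms hMsim)).1, ?_⟩, ?_⟩
  · rw [(Stmt16Aux.matrix_resolvent _ hherm Ms z (hwM Ms hMsim)).2]
    simpa [Stmt16Aux.Fsc] using hMsfix
  · rintro M' ⟨h1, _h2, h3⟩
    apply huniq
    refine ⟨h1, ?_⟩
    rw [(Stmt16Aux.matrix_resolvent _ hherm M' z (hwM M' h1)).2] at h3
    simpa [Stmt16Aux.Fsc] using h3
end

section
/- Let 0 < c ≤ C < ∞, K ≥ 1 and ω > 0. There exist ε₀ > 0 and C₀ > 0, depending only on c, C, K, ω, such that the following holds. Let μ be a Borel probability measure on ℝ supported in [c, C], let z ∈ ℂ with Im z > 0 and |z| ≤ K, let T₀ ∈ ℂ with Im T₀ ≥ ω satisfy T₀ = −∫ (T₀·x + z)^{−1} dμ(x), and let T ∈ ℂ and 𝓔 ∈ ℂ satisfy T·x + z ≠ 0 for all x ∈ [c, C] and T = −∫ (T·x + z)^{−1} dμ(x) + 𝓔. If |𝓔| ≤ ε₀ and |T − T₀| ≤ ε₀,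 then |T − T₀| ≤ C₀ |𝓔|. -/
open MeasureTheory Complex Filter ProbabilityTheory Matrix
open scoped ENNReal NNReal ComplexOrder

section auxStability
open MeasureTheory Complex

private lemma aux_diff17 (u dd ee : ℂ) (x : ℝ) (hd : dd ≠ 0) (he : ee ≠ 0)
    (hrel : ee - dd = u * (x : ℂ)) :
    (x : ℂ) * (dd⁻¹ * ee⁻¹) - (x : ℂ) * dd⁻¹ ^ 2 = -(u * (x : ℂ) ^ 2 * dd⁻¹ ^ 2 * ee⁻¹) := by
  have h2 : ee = dd + u * (x : ℂ) := by linear_combination hrel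
  subst h2
  have hne : dd + u * (x : ℂ) ≠ 0 := he
  have hne2 : (x : ℂ) * u + dd ≠ 0 := by rw [mul_comm, add_comm]; exact hne
  field_simp
  linear_combination (x : ℂ) * mul_inv_cancel₀ hne2

private lemma aux_pt17 (u dd ee : ℂ) (x a b p : ℝ) (hp : 0 < p)
    (hrel : ee - dd = u * (x : ℂ)) (hx0 : 0 < x) (hxb : x ≤ b)
    (hua : ‖u‖ ≤ a) (ha0 : 0 ≤ a)
    (hdlb : p ≤ ‖dd‖) (helb : p / 2 ≤ ‖ee‖) :
    ‖(x : ℂ) * (dd⁻¹ * ee⁻¹) - (x : ℂ) * dd⁻¹ ^ 2‖ ≤ a * (2 * b ^ 2 / p ^ 3) := by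
  have hd : dd ≠ 0 := by
    intro h0; rw [h0] at hdlb; simp at hdlb; linarith
  have he : ee ≠ 0 := by
    intro h0; rw [h0] at helb; simp at helb; linarith
  rw [aux_diff17 u dd ee x hd he hrel, norm_neg,
    norm_mul, norm_mul, norm_mul, norm_pow, norm_pow,
    Complex.norm_real, Real.norm_eq_abs, abs_of_pos hx0, norm_inv, norm_inv]
  have hstep : ‖u‖ * x ^ 2 * (‖dd‖)⁻¹ ^ 2 * (‖ee‖)⁻¹
      ≤ a * b ^ 2 * (p⁻¹) ^ 2 * (p / 2)⁻¹ := by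
    gcongr
  calc _ ≤ a * b ^ 2 * (p⁻¹) ^ 2 * (p / 2)⁻¹ := hstep
  _ = a * (2 * b ^ 2 / p ^ 3) := by field_simp

private lemma aux_re17 (dd : ℂ) (x s' : ℝ) (hx : 0 ≤ x) (him : 0 < dd.im)
    (hsb : s' ^ 2 * Complex.normSq dd ≤ dd.im ^ 2) :
    ((x : ℂ) * dd⁻¹ ^ 2).re ≤ (1 - 2 * s' ^ 2) * (x / Complex.normSq dd) := by
  have hd : dd ≠ 0 := fun h0 => by simp [h0] at him
  have hn : 0 < Complex.normSq dd := Complex.normSq_pos.mpr hd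
  have h1 : ((x : ℂ) * dd⁻¹ ^ 2).re = x * ((dd.re ^ 2 - dd.im ^ 2) / Complex.normSq dd ^ 2) := by
    rw [Complex.re_ofReal_mul, inv_pow, Complex.inv_re, map_pow Complex.normSq, sq dd,
      Complex.mul_re]
    ring_nf
  rw [h1]
  rw [show (1 - 2 * s' ^ 2) * (x / Complex.normSq dd)
      = (1 - 2 * s' ^ 2) * x * Complex.normSq dd / Complex.normSq dd ^ 2 by
    field_simp]
  rw [show x * ((dd.re ^ 2 - dd.im ^ 2) / Complex.normSq dd ^ 2)
      = x * (dd.re ^ 2 - dd.im ^ 2) / Complex.normSq dd ^ 2 by ring]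
  rw [div_le_div_iff_of_pos_right (by positivity)]
  nlinarith [mul_nonneg hx (sub_nonneg.mpr hsb), Complex.normSq_apply dd]

private lemma aux_im17 (dd : ℂ) (x t : ℝ) (hx : 0 ≤ x) (ht : 0 ≤ t)
    (him : t * x ≤ dd.im) (h0 : dd ≠ 0) :
    t * (x / Complex.normSq dd) ≤ -(dd⁻¹).im := by
  have hn : 0 < Complex.normSq dd := Complex.normSq_pos.mpr h0
  rw [Complex.inv_im, neg_div, neg_neg, mul_div_assoc']
  gcongr

private lemma integrable_bdd17 {E : Type*} [NormedAddCommGroup E] {μ : Measure ℝ}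
    [IsFiniteMeasure μ] {f : ℝ → E} (hm : AEStronglyMeasurable f μ) {B : ℝ}
    (h : ∀ᵐ x ∂μ, ‖f x‖ ≤ B) : Integrable f μ :=
  (integrable_const B).mono' hm h

end auxStability

set_option maxHeartbeats 2000000 in
theorem stmt_17 (c C K ω : ℝ) (hc : 0 < c) (hcC : c ≤ C) (hK : 1 ≤ K) (hω : 0 < ω) :
    ∃ ε₀ C₀ : ℝ, 0 < ε₀ ∧ 0 < C₀ ∧
      ∀ μ : Measure ℝ, IsProbabilityMeasure μ → (∀ᵐ x ∂μ, x ∈ Set.Icc c C) →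
      ∀ z : ℂ, 0 < z.im → ‖z‖ ≤ K →
      ∀ T₀ : ℂ, ω ≤ T₀.im → T₀ = -∫ x, (T₀ * (x : ℂ) + z)⁻¹ ∂μ →
      ∀ T ℰ : ℂ, (∀ x ∈ Set.Icc c C, T * (x : ℂ) + z ≠ 0) →
        T = (-∫ x, (T * (x : ℂ) + z)⁻¹ ∂μ) + ℰ →
        ‖ℰ‖ ≤ ε₀ → ‖T - T₀‖ ≤ ε₀ →
        ‖T - T₀‖ ≤ C₀ * ‖ℰ‖ := by
  have hcω : 0 < c * ω := mul_pos hc hω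
  have hC : 0 < C := lt_of_lt_of_le hc hcC
  set M : ℝ := C / (c * ω) + K with hMdef
  have hM : 0 < M := by positivity
  set s : ℝ := c * ω / M with hsdef
  have hs : 0 < s := by positivity
  set δ : ℝ := min 1 (2 * s ^ 2) with hδdef
  have hδ : 0 < δ := lt_min one_pos (by positivity)
  have hδ1 : δ ≤ 1 := min_le_left _ _
  have hδs : δ ≤ 2 * s ^ 2 := min_le_right _ _
  refine ⟨min (c * ω / (2 * C)) (δ * (c * ω) ^ 3 / (4 * C ^ 2)), 2 / δ, ?_, ?_, ?_⟩
  · exact lt_min (by positivity) (by positivity)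
  · positivity
  intro μ hprob hsupp z hzim hzK T₀ hT₀im hT₀eq T ℰ hne hTeq hE hD
  set ε₀ : ℝ := min (c * ω / (2 * C)) (δ * (c * ω) ^ 3 / (4 * C ^ 2)) with hε₀def
  have hε₀pos : 0 < ε₀ := lt_min (by positivity) (by positivity)
  have hε₀2 : ε₀ ≤ δ * (c * ω) ^ 3 / (4 * C ^ 2) := min_le_right _ _
  have hT₀pos : 0 < T₀.im := lt_of_lt_of_le hω hT₀im
  -- pointwise facts for x ∈ [c, C]
  have hdim : ∀ x ∈ Set.Icc c C, c * ω ≤ (T₀ * (x : ℂ) + z).im := by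
    intro x hx
    have h1 : (T₀ * (x : ℂ) + z).im = T₀.im * x + z.im := by
      simp [Complex.add_im, Complex.mul_im]
    rw [h1]
    nlinarith [hx.1, hzim, mul_le_mul hT₀im hx.1 hc.le hT₀pos.le]
  have hd_lb : ∀ x ∈ Set.Icc c C, c * ω ≤ ‖T₀ * (x : ℂ) + z‖ :=
    fun x hx => le_trans (hdim x hx) (Complex.im_le_norm _)
  have hd_ne : ∀ x ∈ Set.Icc c C, T₀ * (x : ℂ) + z ≠ 0 := by
    intro x hx h0
    have h1 := hdim x hx
    rw [h0] at h1
    simp only [Complex.zero_im] at h1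
    linarith
  -- |T₀| ≤ 1/(cω)
  have mh : Measurable fun x : ℝ => (T₀ * (x : ℂ) + z)⁻¹ :=
    ((measurable_const.mul Complex.measurable_ofReal).add measurable_const).inv
  have me : Measurable fun x : ℝ => (T * (x : ℂ) + z)⁻¹ :=
    ((measurable_const.mul Complex.measurable_ofReal).add measurable_const).inv
  have hbound_h : ∀ᵐ (x : ℝ) ∂μ, ‖(T₀ * (x : ℂ) + z)⁻¹‖ ≤ 1 / (c * ω) := by
    filter_upwards [hsupp] with x hx
    rw [norm_inv, one_div]
    exact inv_anti₀ hcω (hd_lb x hx)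
  have hT₀abs : ‖T₀‖ ≤ 1 / (c * ω) := by
    have h1 := norm_integral_le_of_norm_le_const (μ := μ) hbound_h
    rw [probReal_univ, mul_one] at h1
    calc ‖T₀‖ = ‖-∫ x, (T₀ * (x : ℂ) + z)⁻¹ ∂μ‖ := by rw [← hT₀eq]
    _ = ‖∫ x, (T₀ * (x : ℂ) + z)⁻¹ ∂μ‖ := norm_neg _
    _ ≤ 1 / (c * ω) := h1
  have hd_ub : ∀ x ∈ Set.Icc c C, ‖T₀ * (x : ℂ) + z‖ ≤ M := by
    intro x hx
    have hxpos : 0 < x := lt_of_lt_of_le hc hx.1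
    calc ‖T₀ * (x : ℂ) + z‖ ≤ ‖T₀ * (x : ℂ)‖ + ‖z‖ :=
          norm_add_le _ _
    _ = ‖T₀‖ * x + ‖z‖ := by
          rw [norm_mul, Complex.norm_real, Real.norm_eq_abs, abs_of_pos hxpos]
    _ ≤ (1 / (c * ω)) * C + K := by gcongr; exact hx.2
    _ = M := by rw [hMdef]; ring
  -- bounds for e = T x + z
  have hεC : ε₀ * C ≤ c * ω / 2 := by
    have h1 := min_le_left (c * ω / (2 * C)) (δ * (c * ω) ^ 3 / (4 * C ^ 2))
    calc ε₀ * C ≤ (c * ω / (2 * C)) * C := by gcongr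
    _ = c * ω / 2 := by field_simp
  have habsDx : ∀ x ∈ Set.Icc c C, ‖(T - T₀) * (x : ℂ)‖ ≤ ε₀ * C := by
    intro x hx
    have hxpos : 0 < x := lt_of_lt_of_le hc hx.1
    rw [norm_mul, Complex.norm_real, Real.norm_eq_abs, abs_of_pos hxpos]
    gcongr
    exact hx.2
  have he_lb : ∀ x ∈ Set.Icc c C, c * ω / 2 ≤ ‖T * (x : ℂ) + z‖ := by
    intro x hx
    have hsplit : T₀ * (x : ℂ) + z = (T * (x : ℂ) + z) - (T - T₀) * (x : ℂ) := by ring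
    have h1 : ‖T₀ * (x : ℂ) + z‖ ≤
        ‖T * (x : ℂ) + z‖ + ‖(T - T₀) * (x : ℂ)‖ := by
      rw [hsplit]; exact norm_sub_le _ _
    have h2 := habsDx x hx
    have h3 := hd_lb x hx
    linarith [hεC]
  -- integrability
  have hbound_e : ∀ᵐ (x : ℝ) ∂μ, ‖(T * (x : ℂ) + z)⁻¹‖ ≤ 2 / (c * ω) := by
    filter_upwards [hsupp] with x hx
    rw [norm_inv]
    rw [show (2 : ℝ) / (c * ω) = (c * ω / 2)⁻¹ by field_simp]
    exact inv_anti₀ (by positivity) (he_lb x hx)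
  have ih : Integrable (fun x : ℝ => (T₀ * (x : ℂ) + z)⁻¹) μ :=
    integrable_bdd17 mh.aestronglyMeasurable hbound_h
  have ie : Integrable (fun x : ℝ => (T * (x : ℂ) + z)⁻¹) μ :=
    integrable_bdd17 me.aestronglyMeasurable hbound_e
  -- S and S₀
  set S : ℂ := ∫ x : ℝ, (x : ℂ) * ((T₀ * (x : ℂ) + z)⁻¹ * (T * (x : ℂ) + z)⁻¹) ∂μ with hSdef
  set S₀ : ℂ := ∫ x : ℝ, (x : ℂ) * ((T₀ * (x : ℂ) + z)⁻¹) ^ 2 ∂μ with hS₀def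
  have mS : Measurable fun x : ℝ => (x : ℂ) * ((T₀ * (x : ℂ) + z)⁻¹ * (T * (x : ℂ) + z)⁻¹) :=
    Complex.measurable_ofReal.mul (mh.mul me)
  have mS0 : Measurable fun x : ℝ => (x : ℂ) * ((T₀ * (x : ℂ) + z)⁻¹) ^ 2 :=
    Complex.measurable_ofReal.mul (mh.pow_const 2)
  have hbound_S : ∀ᵐ (x : ℝ) ∂μ,
      ‖(x : ℂ) * ((T₀ * (x : ℂ) + z)⁻¹ * (T * (x : ℂ) + z)⁻¹)‖ ≤
        C * ((1 / (c * ω)) * (2 / (c * ω))) := by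
    filter_upwards [hsupp] with x hx
    have hxpos : 0 < x := lt_of_lt_of_le hc hx.1
    rw [norm_mul, norm_mul, Complex.norm_real, Real.norm_eq_abs,
      abs_of_pos hxpos, norm_inv, norm_inv]
    gcongr
    · exact hx.2
    · rw [one_div]
      exact inv_anti₀ hcω (hd_lb x hx)
    · rw [show (2 : ℝ) / (c * ω) = (c * ω / 2)⁻¹ by field_simp]
      exact inv_anti₀ (by positivity) (he_lb x hx)
  have hbound_S0 : ∀ᵐ (x : ℝ) ∂μ,
      ‖(x : ℂ) * ((T₀ * (x : ℂ) + z)⁻¹) ^ 2‖ ≤ C * (1 / (c * ω)) ^ 2 := by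
    filter_upwards [hsupp] with x hx
    have hxpos : 0 < x := lt_of_lt_of_le hc hx.1
    rw [norm_mul, Complex.norm_real, Real.norm_eq_abs, abs_of_pos hxpos,
      norm_pow, norm_inv]
    gcongr
    · exact hx.2
    · rw [one_div]
      exact inv_anti₀ hcω (hd_lb x hx)
  have iS : Integrable (fun x : ℝ =>
      (x : ℂ) * ((T₀ * (x : ℂ) + z)⁻¹ * (T * (x : ℂ) + z)⁻¹)) μ :=
    integrable_bdd17 mS.aestronglyMeasurable hbound_S
  have iS0 : Integrable (fun x : ℝ => (x : ℂ) * ((T₀ * (x : ℂ) + z)⁻¹) ^ 2) μ :=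
    integrable_bdd17 mS0.aestronglyMeasurable hbound_S0
  -- key identity : (T - T₀) * (1 - S) = ℰ
  have key : (T - T₀) * (1 - S) = ℰ := by
    have h1 : T - T₀ = (∫ x : ℝ, ((T₀ * (x : ℂ) + z)⁻¹ - (T * (x : ℂ) + z)⁻¹) ∂μ) + ℰ := by
      rw [integral_sub ih ie]
      calc T - T₀ = ((-∫ x : ℝ, (T * (x : ℂ) + z)⁻¹ ∂μ) + ℰ)
            - (-∫ x : ℝ, (T₀ * (x : ℂ) + z)⁻¹ ∂μ) := by rw [← hTeq, ← hT₀eq]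
      _ = ((∫ x : ℝ, (T₀ * (x : ℂ) + z)⁻¹ ∂μ) - ∫ x : ℝ, (T * (x : ℂ) + z)⁻¹ ∂μ) + ℰ := by
        ring
    have h2 : (∫ x : ℝ, ((T₀ * (x : ℂ) + z)⁻¹ - (T * (x : ℂ) + z)⁻¹) ∂μ) = (T - T₀) * S := by
      rw [hSdef, ← integral_const_mul]
      apply integral_congr_ae
      filter_upwards [hsupp] with x hx
      have hd := hd_ne x hx
      have he := hne x hx
      rw [inv_sub_inv hd he, div_eq_mul_inv, mul_inv]
      ring
    rw [h2] at h1
    linear_combination h1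
  -- |S - S₀| ≤ δ/2
  have hSS0 : ‖S - S₀‖ ≤ δ / 2 := by
    have hdiff : S - S₀ = ∫ x : ℝ, ((x : ℂ) * ((T₀ * (x : ℂ) + z)⁻¹ * (T * (x : ℂ) + z)⁻¹)
        - (x : ℂ) * ((T₀ * (x : ℂ) + z)⁻¹) ^ 2) ∂μ := (integral_sub iS iS0).symm
    have hb : ∀ᵐ (x : ℝ) ∂μ, ‖(x : ℂ) * ((T₀ * (x : ℂ) + z)⁻¹ * (T * (x : ℂ) + z)⁻¹)
        - (x : ℂ) * ((T₀ * (x : ℂ) + z)⁻¹) ^ 2‖ ≤ ε₀ * (2 * C ^ 2 / (c * ω) ^ 3) := by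
      filter_upwards [hsupp] with x hx
      exact aux_pt17 (T - T₀) _ _ x ε₀ C (c * ω) hcω (by ring)
        (lt_of_lt_of_le hc hx.1) hx.2 hD hε₀pos.le (hd_lb x hx) (he_lb x hx)
    have h1 := norm_integral_le_of_norm_le_const (μ := μ) hb
    rw [probReal_univ, mul_one] at h1
    rw [← hdiff] at h1
    calc ‖S - S₀‖ ≤ ε₀ * (2 * C ^ 2 / (c * ω) ^ 3) := h1
    _ ≤ (δ * (c * ω) ^ 3 / (4 * C ^ 2)) * (2 * C ^ 2 / (c * ω) ^ 3) := by gcongr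
    _ = δ / 2 := by field_simp; ring
  -- I := ∫ x / |d|², 0 ≤ I ≤ 1
  set I : ℝ := ∫ x : ℝ, x / Complex.normSq (T₀ * (x : ℂ) + z) ∂μ with hIdef
  have mI : Measurable fun x : ℝ => x / Complex.normSq (T₀ * (x : ℂ) + z) :=
    measurable_id.div (Complex.continuous_normSq.measurable.comp
      ((measurable_const.mul Complex.measurable_ofReal).add measurable_const))
  have hnormSq_lb : ∀ x ∈ Set.Icc c C, (c * ω) ^ 2 ≤ Complex.normSq (T₀ * (x : ℂ) + z) := by
    intro x hx
    rw [← Complex.sq_norm]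
    exact pow_le_pow_left₀ (by positivity) (hd_lb x hx) 2
  have hnormSq_ub : ∀ x ∈ Set.Icc c C, Complex.normSq (T₀ * (x : ℂ) + z) ≤ M ^ 2 := by
    intro x hx
    rw [← Complex.sq_norm]
    exact pow_le_pow_left₀ (norm_nonneg _) (hd_ub x hx) 2
  have hbound_I : ∀ᵐ (x : ℝ) ∂μ, ‖x / Complex.normSq (T₀ * (x : ℂ) + z)‖ ≤ C / (c * ω) ^ 2 := by
    filter_upwards [hsupp] with x hx
    have hxpos : 0 < x := lt_of_lt_of_le hc hx.1
    have h1 := hnormSq_lb x hx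
    rw [Real.norm_eq_abs, abs_div, abs_of_pos hxpos,
      abs_of_pos (lt_of_lt_of_le (by positivity) h1)]
    exact div_le_div₀ hC.le hx.2 (by positivity) h1
  have iI : Integrable (fun x : ℝ => x / Complex.normSq (T₀ * (x : ℂ) + z)) μ :=
    integrable_bdd17 mI.aestronglyMeasurable hbound_I
  have hI0 : 0 ≤ I := by
    rw [hIdef]
    apply integral_nonneg_of_ae
    filter_upwards [hsupp] with x hx
    exact div_nonneg (le_of_lt (lt_of_lt_of_le hc hx.1)) (Complex.normSq_nonneg _)
  -- I ≤ 1
  have ihim : Integrable (fun x : ℝ => -((T₀ * (x : ℂ) + z)⁻¹).im) μ := ih.im.neg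
  have e1 : T₀.im = ∫ x : ℝ, -((T₀ * (x : ℂ) + z)⁻¹).im ∂μ := by
    have h2 := integral_im (μ := μ) ih
    simp only [RCLike.im_to_complex] at h2
    calc T₀.im = (-∫ x : ℝ, (T₀ * (x : ℂ) + z)⁻¹ ∂μ).im := by rw [← hT₀eq]
    _ = -(∫ x : ℝ, (T₀ * (x : ℂ) + z)⁻¹ ∂μ).im := Complex.neg_im _
    _ = -∫ x : ℝ, ((T₀ * (x : ℂ) + z)⁻¹).im ∂μ := by rw [h2]
    _ = ∫ x : ℝ, -((T₀ * (x : ℂ) + z)⁻¹).im ∂μ := (integral_neg _).symm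
  have hmono1 : T₀.im * I ≤ T₀.im := by
    have h3 : T₀.im * I = ∫ x : ℝ, T₀.im * (x / Complex.normSq (T₀ * (x : ℂ) + z)) ∂μ := by
      rw [hIdef, ← integral_const_mul]
    have h5 : (∫ x : ℝ, T₀.im * (x / Complex.normSq (T₀ * (x : ℂ) + z)) ∂μ)
        ≤ ∫ x : ℝ, -((T₀ * (x : ℂ) + z)⁻¹).im ∂μ := by
      apply integral_mono_ae (iI.const_mul T₀.im) ihim
      filter_upwards [hsupp] with x hx
      apply aux_im17 _ _ _ (le_of_lt (lt_of_lt_of_le hc hx.1)) hT₀pos.le _ (hd_ne x hx)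
      have h4 : (T₀ * (x : ℂ) + z).im = T₀.im * x + z.im := by
        simp [Complex.add_im, Complex.mul_im]
      rw [h4]
      linarith [hzim]
    calc T₀.im * I = ∫ x : ℝ, T₀.im * (x / Complex.normSq (T₀ * (x : ℂ) + z)) ∂μ := h3
    _ ≤ ∫ x : ℝ, -((T₀ * (x : ℂ) + z)⁻¹).im ∂μ := h5
    _ = T₀.im := e1.symm
  have hI1 : I ≤ 1 := by
    have h5 : T₀.im * I ≤ T₀.im * 1 := by rwa [mul_one]
    exact le_of_mul_le_mul_left h5 hT₀pos
  -- Re S₀ ≤ (1 - 2s²) I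
  have hsM : s * M = c * ω := by
    rw [hsdef]
    field_simp
  have hS0re : S₀.re ≤ (1 - 2 * s ^ 2) * I := by
    have h2 := integral_re (μ := μ) iS0
    simp only [RCLike.re_to_complex] at h2
    rw [hS₀def, ← h2, hIdef, ← integral_const_mul]
    apply integral_mono_ae iS0.re (iI.const_mul _)
    filter_upwards [hsupp] with x hx
    apply aux_re17 _ _ _ (le_of_lt (lt_of_lt_of_le hc hx.1))
      (lt_of_lt_of_le hcω (hdim x hx))
    have h6 := hnormSq_ub x hx
    have h7 := hdim x hx
    nlinarith [hs.le, Complex.normSq_nonneg (T₀ * (x : ℂ) + z)]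
  have hRe : δ ≤ 1 - S₀.re := by
    nlinarith [mul_nonneg (sub_nonneg.mpr hI1) (sub_nonneg.mpr hδ1),
      mul_nonneg hI0 (sub_nonneg.mpr hδs)]
  have habs1S0 : δ ≤ ‖1 - S₀‖ := by
    have h2 : (1 - S₀).re = 1 - S₀.re := by simp [Complex.sub_re]
    calc δ ≤ 1 - S₀.re := hRe
    _ = (1 - S₀).re := h2.symm
    _ ≤ ‖1 - S₀‖ := Complex.re_le_norm _
  have habs1S : δ / 2 ≤ ‖1 - S‖ := by
    have h2 : (1 : ℂ) - S₀ = (1 - S) + (S - S₀) := by ring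
    have h3 : ‖1 - S₀‖ ≤ ‖1 - S‖ + ‖S - S₀‖ := by
      rw [h2]; exact norm_add_le _ _
    linarith
  have hfin : ‖T - T₀‖ * (δ / 2) ≤ ‖ℰ‖ := by
    have h2 : ‖ℰ‖ = ‖T - T₀‖ * ‖1 - S‖ := by
      rw [← key, norm_mul]
    rw [h2]
    gcongr
  calc ‖T - T₀‖ = (‖T - T₀‖ * (δ / 2)) * (2 / δ) := by
        field_simp
  _ ≤ ‖ℰ‖ * (2 / δ) := by gcongr
  _ = 2 / δ * ‖ℰ‖ := by ring
end

section
/- Let f : ℝ/ℤ → ℂ be of class C² with c₀ = ∫₀¹ f = 0. If there exists an odd integer n ≥ 1 such that |c_n| > Σ_{k=1}^∞ |c_{n·2^k}|, then f is an admissible evaluation function; in particular inf_{x∈[0,1]} g_f(x) > 0. -/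
open MeasureTheory Complex Filter ProbabilityTheory Matrix
open scoped ENNReal NNReal ComplexOrder

section Aux
open Complex

noncomputable def fCoeffAux : Unit := ()

lemma myFCoeff_eq (f : ℝ → ℂ) (k : ℤ) :
    fCoeff f k = fourierCoeffOn zero_lt_one f k := by
  rw [fourierCoeffOn_eq_integral, fCoeff]
  have h : ∀ y : ℝ, ((fourier (-k)) ((y : ℝ) : AddCircle ((1:ℝ) - 0)) : ℂ) • f y
      = f y * Complex.exp (-(2 * (Real.pi : ℂ) * Complex.I * (k:ℂ) * (y:ℂ))) := by
    intro y
    rw [fourier_coe_apply, smul_eq_mul, mul_comm]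
    congr 1
    push_cast
    norm_num
  simp_rw [h]
  norm_num

lemma periodic_deriv1 {g : ℝ → ℂ} (hp : Function.Periodic g 1) :
    Function.Periodic (deriv g) 1 := by
  intro x
  have h : (fun y => g (y + 1)) = g := funext fun y => hp y
  calc deriv g (x + 1) = deriv (fun y => g (y + 1)) x := (deriv_comp_add_const g _ x).symm
    _ = deriv g x := by rw [h]

lemma ibp {g : ℝ → ℂ} (hg : ContDiff ℝ 1 g) (hp : Function.Periodic g 1) {m : ℤ} (hm : m ≠ 0) :
    ‖fourierCoeffOn zero_lt_one g m‖
      ≤ ‖fourierCoeffOn zero_lt_one (deriv g) m‖ / |(m : ℝ)| := by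
  have hd : ∀ x ∈ Set.uIcc (0:ℝ) 1, HasDerivAt g (deriv g x) x := fun x _ =>
    ((hg.differentiable one_ne_zero) x).hasDerivAt
  have hint : IntervalIntegrable (deriv g) MeasureTheory.volume 0 1 :=
    (hg.continuous_deriv le_rfl).intervalIntegrable _ _
  rw [fourierCoeffOn_of_hasDerivAt zero_lt_one hm hd hint]
  have h10 : g 1 - g 0 = 0 := by
    have := hp 0; rw [zero_add] at this; rw [this, sub_self]
  rw [h10, mul_zero, zero_sub, norm_mul]
  have h1 : ‖1 / (-2 * (Real.pi:ℂ) * Complex.I * m)‖ ≤ 1 / |(m:ℝ)| := by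
    rw [norm_div, norm_one]
    have : ‖-2 * (Real.pi:ℂ) * Complex.I * m‖ = 2 * Real.pi * |(m:ℝ)| := by
      simp [norm_mul, abs_of_pos Real.pi_pos]
    rw [this]
    have hm' : (0:ℝ) < |(m:ℝ)| := by
      simp [abs_pos, Int.cast_ne_zero, hm]
    apply one_div_le_one_div_of_le hm'
    nlinarith [Real.pi_gt_three, hm']
  rw [norm_neg, show ((1:ℝ):ℂ) - ((0:ℝ):ℂ) = 1 by norm_num, one_mul]
  calc ‖1 / (-2 * (Real.pi:ℂ) * Complex.I * m)‖ *
        ‖fourierCoeffOn zero_lt_one (deriv g) m‖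
      ≤ 1 / |(m:ℝ)| * ‖fourierCoeffOn zero_lt_one (deriv g) m‖ :=
      mul_le_mul_of_nonneg_right h1 (norm_nonneg _)
    _ = _ := by rw [one_div_mul_eq_div]

lemma coeff_bound (g : ℝ → ℂ) (M : ℝ) (hg : ∀ x ∈ Set.Icc (0:ℝ) 1, ‖g x‖ ≤ M)
    (m : ℤ) : ‖fourierCoeffOn zero_lt_one g m‖ ≤ M := by
  rw [fourierCoeffOn_eq_integral]
  have hb : ‖∫ x in (0:ℝ)..1, ((fourier (-m)) ((x:ℝ) : AddCircle ((1:ℝ)-0)) : ℂ) • g x‖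
      ≤ M * |(1:ℝ) - 0| := by
    apply intervalIntegral.norm_integral_le_of_norm_le_const
    intro x hx
    rw [norm_smul]
    have h1 : ‖((fourier (-m)) ((x:ℝ) : AddCircle ((1:ℝ)-0)) : ℂ)‖ = 1 := by
      rw [fourier_apply]; exact Circle.norm_coe _
    rw [h1, one_mul]
    apply hg
    have : x ∈ Set.Ioc (0:ℝ) 1 := by
      rwa [Set.uIoc_of_le (by norm_num : (0:ℝ) ≤ 1)] at hx
    exact Set.Ioc_subset_Icc_self this
  calc ‖(1 / ((1:ℝ) - 0)) • ∫ x in (0:ℝ)..1,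
        ((fourier (-m)) ((x:ℝ) : AddCircle ((1:ℝ)-0)) : ℂ) • g x‖
      = ‖∫ x in (0:ℝ)..1, ((fourier (-m)) ((x:ℝ) : AddCircle ((1:ℝ)-0)) : ℂ) • g x‖ := by
        norm_num
    _ ≤ M * |(1:ℝ) - 0| := hb
    _ = M := by norm_num

lemma decay (f : ℝ → ℂ) (hper : Function.Periodic f 1) (hf2 : ContDiff ℝ 2 f) :
    ∃ C : ℝ, 0 ≤ C ∧ ∀ m : ℤ, m ≠ 0 → ‖fCoeff f m‖ ≤ C / (m:ℝ)^2 := by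
  have hf1 : ContDiff ℝ 1 f := hf2.of_le (by norm_num)
  have h2 : ContDiff ℝ (1+1) f := by
    have : ((2:ℕ) : WithTop ℕ∞) = 1 + 1 := by norm_num
    rwa [← this]
  have hfd : ContDiff ℝ 1 (deriv f) := (contDiff_succ_iff_deriv.mp h2).2.2
  have hp' : Function.Periodic (deriv f) 1 := periodic_deriv1 hper
  have hcont : Continuous (deriv (deriv f)) := hfd.continuous_deriv le_rfl
  obtain ⟨M, hM⟩ := (isCompact_Icc (a := (0:ℝ)) (b := 1)).exists_bound_of_continuousOn
    hcont.continuousOn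
  refine ⟨max M 0, le_max_right _ _, fun m hm => ?_⟩
  have hb : ‖fourierCoeffOn zero_lt_one (deriv (deriv f)) m‖ ≤ max M 0 :=
    coeff_bound _ _ (fun x hx => le_trans (hM x hx) (le_max_left _ _)) m
  have h1 := ibp hf1 hper hm
  have hh2 := ibp hfd hp' hm
  rw [myFCoeff_eq]
  have hmpos : (0:ℝ) < |(m:ℝ)| := by simp [abs_pos, hm]
  calc ‖fourierCoeffOn zero_lt_one f m‖
      ≤ ‖fourierCoeffOn zero_lt_one (deriv f) m‖ / |(m:ℝ)| := h1
    _ ≤ (max M 0 / |(m:ℝ)|) / |(m:ℝ)| := by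
        gcongr
        exact le_trans hh2 (by gcongr)
    _ = max M 0 / (m:ℝ)^2 := by
        rw [div_div, show |(m:ℝ)| * |(m:ℝ)| = (m:ℝ)^2 by rw [← _root_.sq_abs, sq]]

end Aux

lemma norm_add_lower (a b : ℂ) : ‖a‖ - ‖b‖ ≤ ‖a + b‖ := by
  have h : ‖a‖ ≤ ‖a + b‖ + ‖b‖ := by
    calc ‖a‖ = ‖a + b - b‖ := by rw [add_sub_cancel_right]
      _ ≤ ‖a + b‖ + ‖b‖ := norm_sub_le _ _
  linarith

theorem stmt_19 (f : ℝ → ℂ) (hper : Function.Periodic f 1) (hf2 : ContDiff ℝ 2 f)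
    (hmean : (∫ y in (0:ℝ)..1, f y) = 0)
    (n : ℕ) (hn : 1 ≤ n) (hodd : Odd n)
    (hgap : ∑' k : ℕ, ‖fCoeff f ((n : ℤ) * 2 ^ (k + 1))‖ <
      ‖fCoeff f (n : ℤ)‖) :
    Admissible f := by
  obtain ⟨C, hC0, hC⟩ := decay f hper hf2
  have habse : ∀ (k : ℕ) (x : ℝ),
      ‖Complex.exp (2 * (Real.pi:ℂ) * Complex.I * (k:ℂ) * (x:ℂ))‖ = 1 := by
    intro k x
    rw [show (2 * (Real.pi:ℂ) * Complex.I * (k:ℂ) * (x:ℂ))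
        = ((2 * Real.pi * k * x : ℝ) : ℂ) * Complex.I by push_cast; ring,
      Complex.norm_exp_ofReal_mul_I]
  have habs : ∀ (m : ℕ), 1 ≤ m → ∀ k : ℕ,
      ‖fCoeff f ((m:ℤ) * 2 ^ k)‖ ≤ C / (m:ℝ)^2 * (1/4:ℝ)^k := by
    intro m hm1 k
    have hm0 : (0:ℤ) < (m:ℤ) := by exact_mod_cast hm1
    have hne : ((m:ℤ) * 2 ^ k) ≠ 0 := by positivity
    have h := hC _ hne
    have hcast : (((m:ℤ) * 2 ^ k : ℤ) : ℝ)^2 = (m:ℝ)^2 * 4^k := by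
      push_cast
      rw [mul_pow, ← pow_mul, mul_comm k 2, pow_mul]
      norm_num
    rw [hcast] at h
    refine h.trans (le_of_eq ?_)
    rw [div_mul_eq_div_div, div_eq_mul_inv (C / (m:ℝ)^2), one_div, inv_pow]
  have hgeo : Summable (fun k : ℕ => ((1:ℝ)/4) ^ k) :=
    summable_geometric_of_lt_one (by norm_num) (by norm_num)
  have hsumabs : ∀ m : ℕ, 1 ≤ m →
      Summable (fun k : ℕ => ‖fCoeff f ((m:ℤ) * 2 ^ k)‖) := by
    intro m hm1
    exact Summable.of_nonneg_of_le (fun k => norm_nonneg _)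
      (habs m hm1) (hgeo.mul_left _)
  have hEq2 : ∀ (m : ℕ) (x : ℝ), (fun k : ℕ => ‖fCoeff f ((m:ℤ) * 2 ^ k) *
        Complex.exp (2 * (Real.pi:ℂ) * Complex.I * (k:ℂ) * (x:ℂ))‖)
      = fun k : ℕ => ‖fCoeff f ((m:ℤ) * 2 ^ k)‖ := by
    intro m x
    funext k
    rw [norm_mul, habse, mul_one]
  have hS : ∀ (m : ℕ), 1 ≤ m → ∀ x : ℝ, Summable (fun k : ℕ =>
      fCoeff f ((m:ℤ) * 2 ^ k) *
        Complex.exp (2 * (Real.pi:ℂ) * Complex.I * (k:ℂ) * (x:ℂ))) := by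
    intro m hm1 x
    apply Summable.of_norm
    rw [hEq2 m x]
    exact hsumabs m hm1
  set t : ℝ := ∑' k : ℕ, ‖fCoeff f ((n : ℤ) * 2 ^ (k + 1))‖ with ht
  set ε : ℝ := ‖fCoeff f (n:ℤ)‖ - t with hε
  have hεpos : 0 < ε := sub_pos.mpr hgap
  have hlow : ∀ x : ℝ, ε ≤ ‖∑' k : ℕ, fCoeff f ((n : ℤ) * 2 ^ k) *
      Complex.exp (2 * (Real.pi:ℂ) * Complex.I * (k:ℂ) * (x:ℂ))‖ := by
    intro x
    have hs := hS n hn x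
    rw [Summable.tsum_eq_zero_add hs]
    have h0 : fCoeff f ((n:ℤ) * 2 ^ (0:ℕ)) *
        Complex.exp (2 * (Real.pi:ℂ) * Complex.I * ((0:ℕ):ℂ) * (x:ℂ)) = fCoeff f (n:ℤ) := by
      norm_num
    rw [h0]
    have hEqs : (fun k : ℕ => ‖fCoeff f ((n:ℤ) * 2 ^ (k+1)) *
          Complex.exp (2 * (Real.pi:ℂ) * Complex.I * (((k:ℕ)+1:ℕ):ℂ) * (x:ℂ))‖)
        = fun k : ℕ => ‖fCoeff f ((n:ℤ) * 2 ^ (k+1))‖ := by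
      funext k
      rw [norm_mul, habse, mul_one]
    have htail : ‖∑' k : ℕ, fCoeff f ((n:ℤ) * 2 ^ (k+1)) *
        Complex.exp (2 * (Real.pi:ℂ) * Complex.I * (((k:ℕ)+1:ℕ):ℂ) * (x:ℂ))‖ ≤ t := by
      refine le_trans (norm_tsum_le_tsum_norm ?_) ?_
      · rw [hEqs]
        exact (summable_nat_add_iff 1).mpr (hsumabs n hn)
      · rw [hEqs]
    have hstep : ε ≤ ‖fCoeff f (n:ℤ)‖ - ‖∑' k : ℕ, fCoeff f ((n:ℤ) * 2 ^ (k+1)) *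
        Complex.exp (2 * (Real.pi:ℂ) * Complex.I * (((k:ℕ)+1:ℕ):ℂ) * (x:ℂ))‖ := by
      rw [hε]
      linarith
    exact le_trans hstep (norm_add_lower _ _)
  have hterm : ∀ (x : ℝ) (m : ℕ), (if Odd m then ‖∑' k : ℕ, fCoeff f ((m:ℤ) * 2 ^ k) *
      Complex.exp (2 * (Real.pi:ℂ) * Complex.I * (k:ℂ) * (x:ℂ))‖ ^ 2 else 0)
      ≤ (2*C)^2 / (m:ℝ)^4 := by
    intro x m
    by_cases hm : Odd m
    · rw [if_pos hm]
      have hm1 : 1 ≤ m := by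
        rcases Nat.eq_zero_or_pos m with h | h
        · subst h; simp [Nat.odd_iff] at hm
        · exact h
      have hm2 : (0:ℝ) < (m:ℝ)^2 := by positivity
      have hub : ‖∑' k : ℕ, fCoeff f ((m:ℤ) * 2 ^ k) *
          Complex.exp (2 * (Real.pi:ℂ) * Complex.I * (k:ℂ) * (x:ℂ))‖ ≤ 2 * C / (m:ℝ)^2 := by
        calc ‖∑' k : ℕ, fCoeff f ((m:ℤ) * 2 ^ k) *
            Complex.exp (2 * (Real.pi:ℂ) * Complex.I * (k:ℂ) * (x:ℂ))‖
            ≤ ∑' k : ℕ, ‖fCoeff f ((m:ℤ) * 2 ^ k) *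
              Complex.exp (2 * (Real.pi:ℂ) * Complex.I * (k:ℂ) * (x:ℂ))‖ :=
            norm_tsum_le_tsum_norm (by rw [hEq2 m x]; exact hsumabs m hm1)
          _ = ∑' k : ℕ, ‖fCoeff f ((m:ℤ) * 2 ^ k)‖ := by rw [hEq2 m x]
          _ ≤ ∑' k : ℕ, C / (m:ℝ)^2 * (1/4:ℝ)^k :=
            Summable.tsum_le_tsum (habs m hm1) (hsumabs m hm1) (hgeo.mul_left _)
          _ = C / (m:ℝ)^2 * (1 - 1/4:ℝ)⁻¹ := by
            rw [tsum_mul_left, tsum_geometric_of_lt_one (by norm_num) (by norm_num)]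
          _ ≤ 2 * C / (m:ℝ)^2 := by
            rw [show ((1:ℝ) - 1/4)⁻¹ = 4/3 by norm_num, mul_comm, ← mul_div_assoc]
            gcongr
            linarith
      have hnn : (0:ℝ) ≤ ‖∑' k : ℕ, fCoeff f ((m:ℤ) * 2 ^ k) *
          Complex.exp (2 * (Real.pi:ℂ) * Complex.I * (k:ℂ) * (x:ℂ))‖ := norm_nonneg _
      calc ‖∑' k : ℕ, fCoeff f ((m:ℤ) * 2 ^ k) *
          Complex.exp (2 * (Real.pi:ℂ) * Complex.I * (k:ℂ) * (x:ℂ))‖ ^ 2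
          ≤ (2 * C / (m:ℝ)^2)^2 := pow_le_pow_left₀ hnn hub 2
        _ = (2*C)^2 / (m:ℝ)^4 := by
          rw [div_pow, ← pow_mul]
    · rw [if_neg hm]
      positivity
  have hnneg : ∀ (x : ℝ) (m : ℕ), (0:ℝ) ≤ (if Odd m then ‖∑' k : ℕ, fCoeff f ((m:ℤ) * 2 ^ k) *
      Complex.exp (2 * (Real.pi:ℂ) * Complex.I * (k:ℂ) * (x:ℂ))‖ ^ 2 else 0) := by
    intro x m
    by_cases hm : Odd m
    · rw [if_pos hm]; positivity
    · rw [if_neg hm]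
  have hsummab : ∀ x : ℝ, Summable (fun m : ℕ => if Odd m then ‖∑' k : ℕ,
      fCoeff f ((m:ℤ) * 2 ^ k) *
        Complex.exp (2 * (Real.pi:ℂ) * Complex.I * (k:ℂ) * (x:ℂ))‖ ^ 2 else 0) := by
    intro x
    refine Summable.of_nonneg_of_le (hnneg x) (hterm x) ?_
    refine (((Real.summable_one_div_nat_pow (p := 4)).mpr (by norm_num)).mul_left ((2*C)^2)).congr ?_
    intro m
    rw [mul_one_div]
  refine ⟨hper, hf2, hmean, ε^2, by positivity, fun x _ => ?_⟩
  unfold gFun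
  refine le_trans ?_ (Summable.le_tsum (hsummab x) n (fun m _ => hnneg x m))
  rw [if_pos hodd]
  exact pow_le_pow_left₀ hεpos.le (hlow x) 2
end
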